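/- arXiv:0801.4853 — 5 statements merged into one kernel-verified Lean document; each statement's English description precedes it below -/
import Mathlib

section
/- Let μ ∈ ℂ with Re μ > 0, |λ| < 1, and z₀ ∈ D. Let γ : z(t), 0 ≤ t ≤ 1, be a C¹-curve in D with z(0) = 0 and z(1) = z₀. Then V(z₀, λ) is contained in the closed disk {w ∈ ℂ : |w − (μ/π)·C(λ,γ)| ≤ (|μ|/π)·R(λ,γ)}, where C(λ,γ) = ∫₀¹ c(z(t),λ)·z'(t) dt and R(λ,γ) = ∫₀¹ r(z(t),λ)·|z'(t)| dt, with c(z,λ) = (|z|²(conj(z) − λ)(1 − conj(λ)) − (1 − λ)(1 − conj(λ)·conj(z))) / ((1 − z)(1 − |z|²)(1 + |z|² − 2·Re(λz))) and r(z,λ) = (1 − |λ|²)|z| / ((1 − |z|²)(1 + |z|² − 2·Re(λz))). -/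
open Complex Set Metric

noncomputable section

/-- The open unit disk in `ℂ`. -/
def unitDisk : Set ℂ := Metric.ball (0 : ℂ) 1

/-- `P_f(z) = (2π/μ)·(z f'(z)/f(z)) + (1+z)/(1−z)`. -/
def Pfun (μ : ℂ) (f : ℂ → ℂ) (z : ℂ) : ℂ :=
  2 * (Real.pi : ℂ) / μ * (z * deriv f z / f z) + (1 + z) / (1 - z)

/-- Membership in the class `F_μ`: analytic, non-vanishing on the disk, `f(0) = 1`,
and `Re P_f > 0` on the disk. -/
def memF (μ : ℂ) (f : ℂ → ℂ) : Prop :=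
  AnalyticOnNhd ℂ f unitDisk ∧ (∀ z ∈ unitDisk, f z ≠ 0) ∧ f 0 = 1 ∧
    ∀ z ∈ unitDisk, 0 < (Pfun μ f z).re

/-- Membership in the class `F_μ(λ)`: `f ∈ F_μ` with `f'(0) = (μ/π)(λ − 1)`. -/
def memFlam (μ lam : ℂ) (f : ℂ → ℂ) : Prop :=
  memF μ f ∧ deriv f 0 = μ / (Real.pi : ℂ) * (lam - 1)

/-- The branch of `log f` vanishing at `0`: `log f(z) = ∫₀^z f'(ζ)/f(ζ) dζ`
(integral over the segment from `0` to `z`). -/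
def logf (f : ℂ → ℂ) (z : ℂ) : ℂ :=
  ∫ t in (0:ℝ)..1, deriv f (t * z) / f (t * z) * z

/-- The region of variability `V(z₀, λ) = {log f(z₀) : f ∈ F_μ(λ)}`. -/
def Vset (μ lam z₀ : ℂ) : Set ℂ := {w | ∃ f, memFlam μ lam f ∧ w = logf f z₀}

/-- `δ(w, λ) = (w + λ)/(1 + conj(λ) w)`. -/
def dl (lam w : ℂ) : ℂ := (w + lam) / (1 + (starRingEnd ℂ) lam * w)

/-- `log H_{a,λ}(z) = (μ/π)·∫₀^z (δ(aζ,λ) − 1)/((1 − δ(aζ,λ)ζ)(1 − ζ)) dζ`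
(integral over the segment from `0` to `z`). -/
def Hlog (μ lam a z : ℂ) : ℂ :=
  μ / (Real.pi : ℂ) *
    ∫ t in (0:ℝ)..1,
      (dl lam (a * (t * z)) - 1) /
        ((1 - dl lam (a * (t * z)) * (t * z)) * (1 - t * z)) * z

/-- The function `H_{a,λ}(z) = exp(log H_{a,λ}(z))`. -/
def Hfun (μ lam a z : ℂ) : ℂ := Complex.exp (Hlog μ lam a z)

/-- `c(z, λ)`. -/
def cfun (z lam : ℂ) : ℂ :=
  ((‖z‖ : ℂ) ^ 2 * ((starRingEnd ℂ) z - lam) * (1 - (starRingEnd ℂ) lam)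
      - (1 - lam) * (1 - (starRingEnd ℂ) lam * (starRingEnd ℂ) z)) /
    ((1 - z) * (1 - (‖z‖ : ℂ) ^ 2)
      * (1 + (‖z‖ : ℂ) ^ 2 - 2 * ((lam * z).re : ℂ)))

/-- `r(z, λ)`. -/
def rfun (z lam : ℂ) : ℝ :=
  (1 - ‖lam‖ ^ 2) * ‖z‖ /
    ((1 - ‖z‖ ^ 2) * (1 + ‖z‖ ^ 2 - 2 * (lam * z).re))

/-- A starlike univalent function on the unit disk: analytic, `φ(0) = 0`, `φ'(0) = 1`,
univalent, and `Re(z φ'(z)/φ(z)) > 0` on the disk. -/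
def IsStarlike (φ : ℂ → ℂ) : Prop :=
  AnalyticOnNhd ℂ φ unitDisk ∧ φ 0 = 0 ∧ deriv φ 0 = 1 ∧
    Set.InjOn φ unitDisk ∧
    ∀ z ∈ unitDisk, z ≠ 0 → 0 < (z * deriv φ z / φ z).re

/-- `G(z) = (μ/π)·∫₀^z e^{iθ}ζ/(1 + (conj(λ)e^{iθ} − λ)ζ − e^{iθ}ζ²)² dζ`
(integral over the segment from `0` to `z`). -/
def Gfun (μ lam : ℂ) (θ : ℝ) (z : ℂ) : ℂ :=
  μ / (Real.pi : ℂ) *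
    ∫ t in (0:ℝ)..1,
      Complex.exp (θ * Complex.I) * (t * z) /
        (1 + ((starRingEnd ℂ) lam * Complex.exp (θ * Complex.I) - lam) * (t * z)
          - Complex.exp (θ * Complex.I) * (t * z) ^ 2) ^ 2 * z

end

open Complex Set Metric in
lemma mc (u : ℂ) : u * (starRingEnd ℂ) u = ((norm : ℂ → ℝ) u : ℂ) ^ 2 := by
  rw [Complex.mul_conj, Complex.normSq_eq_norm_sq]; exact Complex.ofReal_pow _ _

open Complex in
lemma re2 (u : ℂ) : 2 * ((u.re : ℝ) : ℂ) = u + (starRingEnd ℂ) u := by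
  rw [Complex.add_conj]; push_cast; ring

open Complex in
lemma Xpos {lam z : ℂ} (hlam : (norm : ℂ → ℝ) lam < 1) (hz : (norm : ℂ → ℝ) z < 1) :
    0 < 1 + (norm : ℂ → ℝ) z ^ 2 - 2 * (lam * z).re := by
  have h1 : (lam * z).re ≤ (norm : ℂ → ℝ) lam * (norm : ℂ → ℝ) z := by
    simpa [norm_mul] using Complex.re_le_norm (lam * z)
  have h0z := norm_nonneg z
  have h0l := norm_nonneg lam
  nlinarith

open Complex in
lemma E'real {lam z : ℂ} :
    Complex.normSq (1 - lam * z) - Complex.normSq ((starRingEnd ℂ) lam - z) * (norm : ℂ → ℝ) z ^ 2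
      = (1 - (norm : ℂ → ℝ) z ^ 2) * (1 + (norm : ℂ → ℝ) z ^ 2 - 2 * (lam * z).re) := by
  have h1 : ((Complex.normSq (1 - lam * z) : ℝ) : ℂ)
      - ((Complex.normSq ((starRingEnd ℂ) lam - z) : ℝ) : ℂ) * (((norm : ℂ → ℝ) z ^ 2 : ℝ) : ℂ)
      = (((1 - (norm : ℂ → ℝ) z ^ 2) * (1 + (norm : ℂ → ℝ) z ^ 2 - 2 * (lam * z).re) : ℝ) : ℂ) := by
    rw [← Complex.mul_conj, ← Complex.mul_conj]
    push_cast
    rw [← mc z, re2 (lam * z)]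
    simp only [map_mul, map_sub, map_one, Complex.conj_conj]
    ring
  exact_mod_cast h1

open Complex in
lemma habsD {lam z : ℂ} (hlam : (norm : ℂ → ℝ) lam < 1) (hz : (norm : ℂ → ℝ) z < 1) :
    (norm : ℂ → ℝ) ((starRingEnd ℂ) lam - z) * (norm : ℂ → ℝ) z < (norm : ℂ → ℝ) (1 - lam * z) := by
  have h0z := norm_nonneg z
  have ha2 : (norm : ℂ → ℝ) z ^ 2 < 1 := by nlinarith
  have hX := Xpos hlam hz
  have hE' := E'real (lam := lam) (z := z)
  have h2 : ((norm : ℂ → ℝ) ((starRingEnd ℂ) lam - z) * (norm : ℂ → ℝ) z) ^ 2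
      < (norm : ℂ → ℝ) (1 - lam * z) ^ 2 := by
    rw [mul_pow]
    nlinarith [mul_pos (by linarith : (0:ℝ) < 1 - (norm : ℂ → ℝ) z ^ 2) hX,
      Complex.sq_norm z, Complex.sq_norm ((starRingEnd ℂ) lam - z), Complex.sq_norm (1 - lam*z)]
  nlinarith [norm_nonneg (1 - lam * z),
    mul_nonneg (norm_nonneg ((starRingEnd ℂ) lam - z)) h0z]

open Complex in
lemma mobius_den_ne {lam z w : ℂ} (hlam : (norm : ℂ → ℝ) lam < 1) (hz : (norm : ℂ → ℝ) z < 1)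
    (hw : (norm : ℂ → ℝ) w ≤ (norm : ℂ → ℝ) z) :
    ((starRingEnd ℂ) lam - z) * w + (1 - lam * z) ≠ 0 := by
  intro h
  have h1 : (1 - lam * z) = -(((starRingEnd ℂ) lam - z) * w) := by linear_combination h
  have h2 : (norm : ℂ → ℝ) (1 - lam * z) = (norm : ℂ → ℝ) ((starRingEnd ℂ) lam - z) * (norm : ℂ → ℝ) w := by
    rw [h1, norm_neg, norm_mul]
  have h3 := mul_le_mul_of_nonneg_left hw (norm_nonneg ((starRingEnd ℂ) lam - z))
  have h4 := habsD hlam hz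
  rw [← h2] at h3
  linarith

open Complex in
lemma one_sub_ne {z : ℂ} (hz : (norm : ℂ → ℝ) z < 1) : (1 : ℂ) - z ≠ 0 := by
  intro h
  have : z = 1 := by linear_combination -h
  rw [this] at hz; simp at hz

set_option maxHeartbeats 4000000 in
lemma key_ineq (lam z w : ℂ) (hlam : (norm : ℂ → ℝ) lam < 1) (hz : (norm : ℂ → ℝ) z < 1)
    (hw : (norm : ℂ → ℝ) w ≤ (norm : ℂ → ℝ) z) :
    (norm : ℂ → ℝ) (((1 - (starRingEnd ℂ) lam) * w - (1 - lam)) /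
        ((((starRingEnd ℂ) lam - z) * w + (1 - lam * z)) * (1 - z)) - cfun z lam)
      ≤ rfun z lam := by
  have h0z := norm_nonneg z
  have h0l := norm_nonneg lam
  have ha2 : (norm : ℂ → ℝ) z ^ 2 < 1 := by nlinarith
  have hl2 : (norm : ℂ → ℝ) lam ^ 2 < 1 := by nlinarith
  have hX : 0 < 1 + (norm : ℂ → ℝ) z ^ 2 - 2 * (lam * z).re := Xpos hlam hz
  have hz1 : (1 : ℂ) - z ≠ 0 := one_sub_ne hz
  have habs1z : 0 < (norm : ℂ → ℝ) (1 - z) := norm_pos_iff.mpr hz1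
  -- the real "X" and "E"
  set X : ℝ := 1 + (norm : ℂ → ℝ) z ^ 2 - 2 * (lam * z).re with hXdef
  set E : ℝ := (norm : ℂ → ℝ) (1 - z) ^ 2 * (1 - (norm : ℂ → ℝ) z ^ 2) * X with hEdef
  have hEpos : 0 < E := by
    apply mul_pos (mul_pos (by positivity) (by linarith)) hX
  -- complex version of E
  have hEcast : ((E : ℝ) : ℂ)
      = ((1 - lam * z) * (1 - z)) * ((1 - (starRingEnd ℂ) lam * (starRingEnd ℂ) z) * (1 - (starRingEnd ℂ) z))
        - (((starRingEnd ℂ) lam - z) * (1 - z)) * ((lam - (starRingEnd ℂ) z) * (1 - (starRingEnd ℂ) z))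
          * (z * (starRingEnd ℂ) z) := by
    rw [hEdef, hXdef]
    push_cast
    rw [← mc z, ← mc (1 - z), re2 (lam * z)]
    simp only [map_mul, map_sub, map_one]
    ring
  -- nonvanishing of the Möbius denominator
  have hE'real := E'real (lam := lam) (z := z)
  have hD0 : ((starRingEnd ℂ) lam - z) * w + (1 - lam * z) ≠ 0 := mobius_den_ne hlam hz hw
  have hden : (((starRingEnd ℂ) lam - z) * w + (1 - lam * z)) * (1 - z) ≠ 0 := mul_ne_zero hD0 hz1
  have hEne : ((E : ℝ) : ℂ) ≠ 0 := Complex.ofReal_ne_zero.mpr hEpos.ne'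
  have hfac2 : (1 : ℂ) - ((norm : ℂ → ℝ) z : ℂ) ^ 2 ≠ 0 := by
    have : (1 : ℂ) - ((norm : ℂ → ℝ) z : ℂ) ^ 2 = ((1 - (norm : ℂ → ℝ) z ^ 2 : ℝ) : ℂ) := by push_cast; ring
    rw [this]
    exact Complex.ofReal_ne_zero.mpr (by linarith)
  have hfac3 : (1 : ℂ) + ((norm : ℂ → ℝ) z : ℂ) ^ 2 - 2 * (((lam * z).re : ℝ) : ℂ) ≠ 0 := by
    have : (1 : ℂ) + ((norm : ℂ → ℝ) z : ℂ) ^ 2 - 2 * (((lam * z).re : ℝ) : ℂ) = ((X : ℝ) : ℂ) := by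
      rw [hXdef]; push_cast; ring
    rw [this]
    exact Complex.ofReal_ne_zero.mpr hX.ne'
  have hcden : (1 - z) * (1 - ((norm : ℂ → ℝ) z : ℂ) ^ 2)
      * (1 + ((norm : ℂ → ℝ) z : ℂ) ^ 2 - 2 * (((lam * z).re : ℝ) : ℂ)) ≠ 0 :=
    mul_ne_zero (mul_ne_zero hz1 hfac2) hfac3
  have hdiff : ((1 - (starRingEnd ℂ) lam) * w - (1 - lam)) /
        ((((starRingEnd ℂ) lam - z) * w + (1 - lam * z)) * (1 - z)) - cfun z lam
      = (((1 - ((norm : ℂ → ℝ) lam : ℂ) ^ 2) * (1 - z) ^ 2) *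
          (((1 - (starRingEnd ℂ) lam * (starRingEnd ℂ) z) * (1 - (starRingEnd ℂ) z)) * w
            + ((lam - (starRingEnd ℂ) z) * (1 - (starRingEnd ℂ) z)) * (z * (starRingEnd ℂ) z)))
        / (((E : ℝ) : ℂ) * ((((starRingEnd ℂ) lam - z) * w + (1 - lam * z)) * (1 - z))) := by
    unfold cfun
    rw [div_sub_div _ _ hden hcden,
      div_eq_div_iff (mul_ne_zero hden hcden) (mul_ne_zero hEne hden), hEcast]
    push_cast
    rw [← mc z, ← mc lam, re2 (lam * z)]
    simp only [map_mul, map_sub, map_one]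
    ring
  have hkey2 : (((norm : ℂ → ℝ) z ^ 2 : ℝ) : ℂ)
        * ((Complex.normSq ((((starRingEnd ℂ) lam - z) * w + (1 - lam * z)) * (1 - z)) : ℝ) : ℂ)
      - ((Complex.normSq (((1 - (starRingEnd ℂ) lam * (starRingEnd ℂ) z) * (1 - (starRingEnd ℂ) z)) * w
            + ((lam - (starRingEnd ℂ) z) * (1 - (starRingEnd ℂ) z)) * (z * (starRingEnd ℂ) z)) : ℝ) : ℂ)
      = (((norm : ℂ → ℝ) z ^ 2 - (norm : ℂ → ℝ) w ^ 2 : ℝ) : ℂ) * ((E : ℝ) : ℂ) := by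
    rw [← Complex.mul_conj, ← Complex.mul_conj, hEcast]
    push_cast
    rw [← mc z, ← mc w]
    simp only [map_add, map_mul, map_sub, map_one, Complex.conj_conj]
    ring
  have hkey3 : (norm : ℂ → ℝ) z ^ 2
        * Complex.normSq ((((starRingEnd ℂ) lam - z) * w + (1 - lam * z)) * (1 - z))
      - Complex.normSq (((1 - (starRingEnd ℂ) lam * (starRingEnd ℂ) z) * (1 - (starRingEnd ℂ) z)) * w
            + ((lam - (starRingEnd ℂ) z) * (1 - (starRingEnd ℂ) z)) * (z * (starRingEnd ℂ) z))
      = ((norm : ℂ → ℝ) z ^ 2 - (norm : ℂ → ℝ) w ^ 2) * E := by exact_mod_cast hkey2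
  have hw2 : (norm : ℂ → ℝ) w ^ 2 ≤ (norm : ℂ → ℝ) z ^ 2 := by nlinarith [norm_nonneg w]
  have habsV2 : (norm : ℂ → ℝ) (((1 - (starRingEnd ℂ) lam * (starRingEnd ℂ) z) * (1 - (starRingEnd ℂ) z)) * w
            + ((lam - (starRingEnd ℂ) z) * (1 - (starRingEnd ℂ) z)) * (z * (starRingEnd ℂ) z))
      ≤ (norm : ℂ → ℝ) z *
        (norm : ℂ → ℝ) ((((starRingEnd ℂ) lam - z) * w + (1 - lam * z)) * (1 - z)) := by
    apply le_of_pow_le_pow_left₀ two_ne_zero (by positivity)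
    rw [mul_pow]
    nlinarith [Complex.sq_norm (((1 - (starRingEnd ℂ) lam * (starRingEnd ℂ) z) * (1 - (starRingEnd ℂ) z)) * w
            + ((lam - (starRingEnd ℂ) z) * (1 - (starRingEnd ℂ) z)) * (z * (starRingEnd ℂ) z)),
      Complex.sq_norm ((((starRingEnd ℂ) lam - z) * w + (1 - lam * z)) * (1 - z)),
      mul_nonneg (sub_nonneg.mpr hw2) hEpos.le]
  have habsD0 : 0 < (norm : ℂ → ℝ) ((((starRingEnd ℂ) lam - z) * w + (1 - lam * z)) * (1 - z)) :=
    norm_pos_iff.mpr hden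
  rw [hdiff, norm_div, norm_mul, norm_mul, norm_mul]
  have h1 : (norm : ℂ → ℝ) (1 - ((norm : ℂ → ℝ) lam : ℂ) ^ 2) = 1 - (norm : ℂ → ℝ) lam ^ 2 := by
    have : (1 : ℂ) - ((norm : ℂ → ℝ) lam : ℂ) ^ 2 = ((1 - (norm : ℂ → ℝ) lam ^ 2 : ℝ) : ℂ) := by
      push_cast; ring
    rw [this, Complex.norm_real, Real.norm_eq_abs, abs_of_pos (by linarith)]
  have h2 : (norm : ℂ → ℝ) ((1 - z) ^ 2) = (norm : ℂ → ℝ) (1 - z) ^ 2 := by rw [norm_pow]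
  have h3 : (norm : ℂ → ℝ) ((E : ℝ) : ℂ) = E := by
    rw [Complex.norm_real, Real.norm_eq_abs, abs_of_pos hEpos]
  rw [h1, h2, h3]
  calc (1 - (norm : ℂ → ℝ) lam ^ 2) * (norm : ℂ → ℝ) (1 - z) ^ 2 *
          (norm : ℂ → ℝ) (((1 - (starRingEnd ℂ) lam * (starRingEnd ℂ) z) * (1 - (starRingEnd ℂ) z)) * w
            + ((lam - (starRingEnd ℂ) z) * (1 - (starRingEnd ℂ) z)) * (z * (starRingEnd ℂ) z))
        / (E * (norm : ℂ → ℝ) ((((starRingEnd ℂ) lam - z) * w + (1 - lam * z)) * (1 - z)))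
      ≤ (1 - (norm : ℂ → ℝ) lam ^ 2) * (norm : ℂ → ℝ) (1 - z) ^ 2 *
          ((norm : ℂ → ℝ) z * (norm : ℂ → ℝ) ((((starRingEnd ℂ) lam - z) * w + (1 - lam * z)) * (1 - z)))
        / (E * (norm : ℂ → ℝ) ((((starRingEnd ℂ) lam - z) * w + (1 - lam * z)) * (1 - z))) := by
        have hnum := mul_le_mul_of_nonneg_left habsV2
          (mul_nonneg (by linarith : (0:ℝ) ≤ 1 - (norm : ℂ → ℝ) lam ^ 2) (by positivity :
            (0:ℝ) ≤ (norm : ℂ → ℝ) (1 - z) ^ 2))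
        exact (div_le_div_iff_of_pos_right (mul_pos hEpos habsD0)).mpr hnum
    _ = rfun z lam := by
        simp only [rfun]
        rw [← hXdef]
        rw [div_eq_div_iff (mul_pos hEpos habsD0).ne'
          (mul_pos (by linarith : (0:ℝ) < 1 - (norm : ℂ → ℝ) z ^ 2) hX).ne']
        rw [hEdef]
        ring
  done

open Complex Set Metric in
set_option maxHeartbeats 1000000 in
lemma deriv_bound (μ lam : ℂ) (hμ : 0 < μ.re) (hlam : (norm : ℂ → ℝ) lam < 1)
    (f : ℂ → ℂ) (hf : memFlam μ lam f) {z : ℂ} (hz : z ∈ unitDisk) :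
    (norm : ℂ → ℝ) (deriv f z / f z - μ / (Real.pi : ℂ) * cfun z lam)
      ≤ (norm : ℂ → ℝ) μ / Real.pi * rfun z lam := by
  obtain ⟨⟨hfA, hfne, hf0, hfP⟩, hfd⟩ := hf
  have hπc : (Real.pi : ℂ) ≠ 0 := Complex.ofReal_ne_zero.mpr Real.pi_ne_zero
  have hμ0 : μ ≠ 0 := by intro h; rw [h] at hμ; simp at hμ
  have hopen : IsOpen unitDisk := Metric.isOpen_ball
  have h0mem : (0 : ℂ) ∈ unitDisk := by simp [unitDisk]
  have hzabs : (norm : ℂ → ℝ) z < 1 := by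
    simpa using mem_ball_zero_iff.mp hz
  have hmemabs : ∀ {y : ℂ}, y ∈ unitDisk → (norm : ℂ → ℝ) y < 1 := fun hy => by
    simpa using mem_ball_zero_iff.mp hy
  have hfD : DifferentiableOn ℂ f unitDisk := hfA.differentiableOn
  have hdfD : DifferentiableOn ℂ (deriv f) unitDisk := hfA.deriv.differentiableOn
  have h1z : ∀ y ∈ unitDisk, (1 : ℂ) - y ≠ 0 := fun y hy => one_sub_ne (hmemabs hy)
  set p : ℂ → ℂ := Pfun μ f with hp
  have hpD : DifferentiableOn ℂ p unitDisk := by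
    apply DifferentiableOn.add
    · exact (differentiableOn_const _).mul ((differentiableOn_id.mul hdfD).div hfD hfne)
    · exact ((differentiableOn_const _).add differentiableOn_id).div
        ((differentiableOn_const _).sub differentiableOn_id) h1z
  have hp1 : ∀ y ∈ unitDisk, p y + 1 ≠ 0 := by
    intro y hy h
    have h2 := hfP y hy
    have h3 := congrArg Complex.re h
    simp only [Complex.add_re, Complex.one_re, Complex.zero_re] at h3
    linarith
  have hp0 : p 0 = 1 := by simp [hp, Pfun]
  set ω : ℂ → ℂ := fun y => (p y - 1) / (p y + 1) with hw
  have hωD : DifferentiableOn ℂ ω unitDisk :=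
    (hpD.sub (differentiableOn_const 1)).div (hpD.add (differentiableOn_const 1)) hp1
  have hω0 : ω 0 = 0 := by simp [hw, hp0]
  have hωlt : ∀ y ∈ unitDisk, (norm : ℂ → ℝ) (ω y) < 1 := by
    intro y hy
    have h2 := hfP y hy
    have e1 : Complex.normSq (p y + 1) - Complex.normSq (p y - 1) = 4 * (p y).re := by
      simp [Complex.normSq_apply, Complex.add_re, Complex.sub_re, Complex.add_im,
        Complex.sub_im]
      ring
    have h3 : (norm : ℂ → ℝ) (p y - 1) < (norm : ℂ → ℝ) (p y + 1) := by
      apply lt_of_pow_lt_pow_left₀ 2 (norm_nonneg _)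
      rw [Complex.sq_norm, Complex.sq_norm]
      linarith
    rw [hw]
    simp only [norm_div]
    exact (div_lt_one (norm_pos_iff.mpr (hp1 y hy))).mpr h3
  set δ : ℂ → ℂ := dslope ω 0 with hd
  have hωD' : DifferentiableOn ℂ ω (Metric.ball (0 : ℂ) 1) := hωD
  have hδD : DifferentiableOn ℂ δ unitDisk :=
    (differentiableOn_dslope (hopen.mem_nhds h0mem)).mpr hωD
  have hδle : ∀ y ∈ unitDisk, (norm : ℂ → ℝ) (δ y) ≤ 1 := by
    intro y hy
    have hmaps : Set.MapsTo ω (Metric.ball (0 : ℂ) 1) (Metric.ball (ω 0) 1) := by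
      intro u hu
      rw [hω0]
      exact mem_ball_zero_iff.mpr (by simpa using hωlt u hu)
    have := Complex.norm_dslope_le_div_of_mapsTo_ball hωD' (hmaps.mono_right Metric.ball_subset_closedBall) (show y ∈ Metric.ball (0:ℂ) 1 from hy)
    simpa [hd] using this
  -- δ 0 = lam
  have hf_at0 : DifferentiableAt ℂ f 0 := hfD.differentiableAt (hopen.mem_nhds h0mem)
  have hdf_at0 : DifferentiableAt ℂ (deriv f) 0 := hdfD.differentiableAt (hopen.mem_nhds h0mem)
  have hq : DifferentiableAt ℂ (fun y => deriv f y / f y) 0 :=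
    hdf_at0.div hf_at0 (by rw [hf0]; exact one_ne_zero)
  have hzg : HasDerivAt (fun y => y * (deriv f y / f y)) (deriv f 0 / f 0) 0 := by
    have h := (hasDerivAt_id (0 : ℂ)).mul hq.hasDerivAt
    exact h.congr_deriv (by simp)
  have hm : HasDerivAt (fun y : ℂ => (1 + y) / (1 - y)) 2 0 := by
    have h1 : HasDerivAt (fun y : ℂ => 1 + y) 1 0 := by
      simpa using (hasDerivAt_id (0 : ℂ)).const_add 1
    have h2 : HasDerivAt (fun y : ℂ => 1 - y) (-1) 0 := by
      simpa using (hasDerivAt_id (0 : ℂ)).const_sub 1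
    have h3 := h1.div h2 (by norm_num)
    exact h3.congr_deriv (by norm_num)
  have hpderiv : HasDerivAt p (2 * lam) 0 := by
    have hc := hzg.const_mul (2 * (Real.pi : ℂ) / μ)
    have h4 := hc.add hm
    have hfun : (fun y => 2 * (Real.pi : ℂ) / μ * (y * (deriv f y / f y)) + (1 + y) / (1 - y)) = p := by
      funext y
      rw [hp]
      simp [Pfun, mul_div_assoc]
    rw [← hfun]
    refine h4.congr_deriv ?_
    rw [hfd, hf0]
    field_simp
    ring
  have hωderiv : HasDerivAt ω lam 0 := by
    have h5 := (hpderiv.sub_const 1).div (hpderiv.add_const 1) (by rw [hp0]; norm_num)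
    exact h5.congr_deriv (by rw [hp0]; ring)
  have hδ0 : δ 0 = lam := by rw [hd, dslope_same]; exact hωderiv.deriv
  -- the function v
  have hδden : ∀ y ∈ unitDisk, 1 - (starRingEnd ℂ) lam * δ y ≠ 0 := by
    intro y hy h
    have h1 : (norm : ℂ → ℝ) ((starRingEnd ℂ) lam * δ y) < 1 := by
      rw [norm_mul, Complex.norm_conj]
      nlinarith [hδle y hy, norm_nonneg lam, norm_nonneg (δ y)]
    have h2 : (starRingEnd ℂ) lam * δ y = 1 := by linear_combination -h
    rw [h2] at h1
    simp at h1
  set v : ℂ → ℂ := fun y => (δ y - lam) / (1 - (starRingEnd ℂ) lam * δ y) with hv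
  have hvD : DifferentiableOn ℂ v unitDisk :=
    (hδD.sub (differentiableOn_const _)).div
      ((differentiableOn_const _).sub ((differentiableOn_const _).mul hδD)) hδden
  have hv0 : v 0 = 0 := by rw [hv]; simp [hδ0]
  have hvle1 : ∀ y ∈ unitDisk, (norm : ℂ → ℝ) (v y) ≤ 1 := by
    intro y hy
    rw [hv]
    simp only [norm_div]
    rw [div_le_one (norm_pos_iff.mpr (hδden y hy))]
    have hidc : ((Complex.normSq (1 - (starRingEnd ℂ) lam * δ y) : ℝ) : ℂ)
        - ((Complex.normSq (δ y - lam) : ℝ) : ℂ)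
        = (1 - ((norm : ℂ → ℝ) lam : ℂ) ^ 2) * (1 - ((norm : ℂ → ℝ) (δ y) : ℂ) ^ 2) := by
      rw [← Complex.mul_conj, ← Complex.mul_conj, ← mc lam, ← mc (δ y)]
      simp only [map_mul, map_sub, map_one, Complex.conj_conj]
      ring
    have hidr : Complex.normSq (1 - (starRingEnd ℂ) lam * δ y) - Complex.normSq (δ y - lam)
        = (1 - (norm : ℂ → ℝ) lam ^ 2) * (1 - (norm : ℂ → ℝ) (δ y) ^ 2) := by
      exact_mod_cast hidc
    have hge : 0 ≤ (1 - (norm : ℂ → ℝ) lam ^ 2) * (1 - (norm : ℂ → ℝ) (δ y) ^ 2) := by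
      have h9 := hδle y hy
      have h0l := norm_nonneg lam
      have h0d := norm_nonneg (δ y)
      have t1 : 0 ≤ 1 - (norm : ℂ → ℝ) lam ^ 2 := by nlinarith
      have t2 : 0 ≤ 1 - (norm : ℂ → ℝ) (δ y) ^ 2 := by nlinarith
      exact mul_nonneg t1 t2
    apply le_of_pow_le_pow_left₀ two_ne_zero (norm_nonneg _)
    rw [Complex.sq_norm, Complex.sq_norm]
    linarith
  have hvlez : ∀ y ∈ unitDisk, (norm : ℂ → ℝ) (v y) ≤ (norm : ℂ → ℝ) y := by
    intro y hy
    have key : ∀ R : ℝ, 1 < R → (norm : ℂ → ℝ) (v y) ≤ R * (norm : ℂ → ℝ) y := by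
      intro R hR
      have hvD' : DifferentiableOn ℂ v (Metric.ball (0 : ℂ) 1) := hvD
      have hmaps : Set.MapsTo v (Metric.ball (0 : ℂ) 1) (Metric.ball (v 0) R) := by
        intro u hu
        rw [hv0]
        exact mem_ball_zero_iff.mpr (lt_of_le_of_lt
          (by simpa using hvle1 u hu) hR)
      have h6 := Complex.dist_le_div_mul_dist_of_mapsTo_ball hvD' (hmaps.mono_right Metric.ball_subset_closedBall)
        (show y ∈ Metric.ball (0 : ℂ) 1 from hy)
      simpa [hv0, Complex.dist_eq, div_one] using h6
    apply le_of_forall_pos_le_add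
    intro ε hε
    have h7 := key (1 + ε) (by linarith)
    have h8 : (norm : ℂ → ℝ) y ≤ 1 := le_of_lt (hmemabs hy)
    nlinarith
  -- main case distinction
  by_cases hz0 : z = 0
  · subst hz0
    have hc0 : cfun 0 lam = lam - 1 := by
      simp [cfun]
    have hr0 : rfun 0 lam = 0 := by
      simp [rfun]
    rw [hc0, hr0, hfd, hf0, mul_zero]
    simp
  · -- z ≠ 0
    set w' : ℂ := v z with hwdef
    have hww : (norm : ℂ → ℝ) w' ≤ (norm : ℂ → ℝ) z := hvlez z hz
    have hωz : ω z = z * δ z := by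
      have h1 : δ z = ω z / z := by
        rw [hd, dslope_of_ne ω hz0, slope_def_field, hω0, sub_zero, sub_zero]
      rw [h1]
      field_simp
    have hδw : δ z * (1 + (starRingEnd ℂ) lam * w') = w' + lam := by
      have h1 : w' * (1 - (starRingEnd ℂ) lam * δ z) = δ z - lam := by
        rw [hwdef, hv]
        exact div_mul_cancel₀ _ (hδden z hz)
      linear_combination -h1
    have hD0 : ((starRingEnd ℂ) lam - z) * w' + (1 - lam * z) ≠ 0 :=
      mobius_den_ne hlam hzabs hww
    have h1mz : (1 : ℂ) - z ≠ 0 := one_sub_ne hzabs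
    have hfz : f z ≠ 0 := hfne z hz
    have hp_eq : p z - 1 = ω z * (p z + 1) := by
      rw [hw]
      exact (div_mul_cancel₀ _ (hp1 z hz)).symm
    have hPdef : p z = 2 * (Real.pi : ℂ) / μ * (z * deriv f z / f z) + (1 + z) / (1 - z) := rfl
    have s1 : p z * (1 - ω z) = 1 + ω z := by linear_combination hp_eq
    have s2 : ω z * (1 + (starRingEnd ℂ) lam * w') = z * (w' + lam) := by
      rw [hωz]
      linear_combination z * hδw
    have s4 : (1 - ω z) * (1 + (starRingEnd ℂ) lam * w')
        = ((starRingEnd ℂ) lam - z) * w' + (1 - lam * z) := by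
      linear_combination -s2
    have s5 : p z * (((starRingEnd ℂ) lam - z) * w' + (1 - lam * z))
        = (1 + (starRingEnd ℂ) lam * w') + z * (w' + lam) := by
      linear_combination (1 + (starRingEnd ℂ) lam * w') * s1 - (p z) * s4 + s2
    have s6 : p z * (μ * (1 - z)) * f z
        = 2 * (Real.pi : ℂ) * (z * deriv f z) * (1 - z) + μ * (1 + z) * f z := by
      rw [hPdef]
      field_simp
    have hg2 : 2 * z * ((Real.pi : ℂ) * deriv f z
          * ((((starRingEnd ℂ) lam - z) * w' + (1 - lam * z)) * (1 - z)))
        = 2 * z * (μ * ((1 - (starRingEnd ℂ) lam) * w' - (1 - lam)) * f z) := by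
      linear_combination (-(((starRingEnd ℂ) lam - z) * w' + (1 - lam * z))) * s6
        + (μ * (1 - z) * f z) * s5
    have h2z : (2 : ℂ) * z ≠ 0 := mul_ne_zero two_ne_zero hz0
    have hg3 := mul_left_cancel₀ h2z hg2
    have hgoal : deriv f z / f z = μ / (Real.pi : ℂ) *
        (((1 - (starRingEnd ℂ) lam) * w' - (1 - lam)) /
          ((((starRingEnd ℂ) lam - z) * w' + (1 - lam * z)) * (1 - z))) := by
      have hden : (((starRingEnd ℂ) lam - z) * w' + (1 - lam * z)) * (1 - z) ≠ 0 :=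
        mul_ne_zero hD0 h1mz
      rw [div_mul_div_comm, div_eq_div_iff hfz (mul_ne_zero hπc hden)]
      linear_combination hg3
    rw [hgoal, ← mul_sub, norm_mul, norm_div, Complex.norm_real, Real.norm_eq_abs,
      abs_of_pos Real.pi_pos]
    exact mul_le_mul_of_nonneg_left (key_ineq lam z w' hlam hzabs hww) (by positivity)

open Complex Set Metric MeasureTheory in
set_option maxHeartbeats 1000000 in
lemma hasDerivAt_primitive (g : ℂ → ℂ) (hg : DifferentiableOn ℂ g unitDisk)
    {x : ℂ} (hx : x ∈ unitDisk) :
    HasDerivAt (fun y => ∫ t in (0:ℝ)..1, g ((t : ℂ) * y) * y) (g x) x := by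
  have hopen : IsOpen unitDisk := Metric.isOpen_ball
  have hxa : (norm : ℂ → ℝ) x < 1 := by simpa using mem_ball_zero_iff.mp hx
  have hganal : AnalyticOnNhd ℂ g unitDisk := hg.analyticOnNhd hopen
  have hgc : ContinuousOn g unitDisk := hg.continuousOn
  have hg'c : ContinuousOn (deriv g) unitDisk := hganal.deriv.continuousOn
  have h0x := norm_nonneg x
  set ρ : ℝ := (1 + (norm : ℂ → ℝ) x) / 2 with hρ
  have hρ1 : ρ < 1 := by rw [hρ]; linarith
  have hρx : (norm : ℂ → ℝ) x < ρ := by rw [hρ]; linarith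
  have hρ0 : 0 ≤ ρ := by rw [hρ]; linarith
  have hK : Metric.closedBall (0 : ℂ) ρ ⊆ unitDisk := fun u hu =>
    mem_ball_zero_iff.mpr (lt_of_le_of_lt (mem_closedBall_zero_iff.mp hu) hρ1)
  have hcpt : IsCompact (Metric.closedBall (0 : ℂ) ρ) := isCompact_closedBall _ _
  obtain ⟨M, hM⟩ := hcpt.exists_bound_of_continuousOn (hgc.mono hK)
  obtain ⟨M', hM'⟩ := hcpt.exists_bound_of_continuousOn (hg'c.mono hK)
  set ε : ℝ := (1 - (norm : ℂ → ℝ) x) / 2 with hε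
  have hε0 : 0 < ε := by rw [hε]; linarith
  have hball : ∀ y ∈ Metric.ball x ε, ∀ t : ℝ, |t| ≤ 1 →
      ((t : ℂ) * y) ∈ Metric.closedBall (0 : ℂ) ρ := by
    intro y hy t ht
    have h1 : (norm : ℂ → ℝ) y < ρ := by
      have h2 := mem_ball_iff_norm.mp hy
      have h3 := norm_sub_norm_le y x
      rw [hρ]; rw [hε] at h2
      linarith
    rw [mem_closedBall_zero_iff]
    simp only [norm_mul, Complex.norm_real, Real.norm_eq_abs]
    nlinarith [norm_nonneg y, abs_nonneg t]
  have hcontt : Continuous fun t : ℝ => ((t : ℂ) * x) :=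
    Complex.continuous_ofReal.mul continuous_const
  have hmapIcc : ∀ t ∈ Set.uIcc (0:ℝ) 1, ((t : ℂ) * x) ∈ unitDisk := by
    intro t ht
    rw [Set.uIcc_of_le (by norm_num : (0:ℝ) ≤ 1)] at ht
    exact hK (hball x (mem_ball_self hε0) t (abs_le.mpr ⟨by linarith [ht.1], ht.2⟩))
  have hcontF' : ContinuousOn (fun t : ℝ => deriv g ((t : ℂ) * x) * t * x + g ((t : ℂ) * x))
      (Set.uIcc (0:ℝ) 1) := by
    apply ContinuousOn.add
    · exact ((hg'c.comp hcontt.continuousOn hmapIcc).mul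
        Complex.continuous_ofReal.continuousOn).mul continuousOn_const
    · exact hgc.comp hcontt.continuousOn hmapIcc
  have main := intervalIntegral.hasDerivAt_integral_of_dominated_loc_of_deriv_le
    (F := fun y t => g ((t : ℂ) * y) * y)
    (F' := fun y t => deriv g ((t : ℂ) * y) * t * y + g ((t : ℂ) * y))
    (x₀ := x) (a := (0:ℝ)) (b := 1) (μ := MeasureTheory.volume) (bound := fun _ => M' * 1 * ρ + M) (Metric.ball_mem_nhds x hε0)
    ?_ ?_ ?_ ?_ ?_ ?_
  · -- conclude via FTC
    have hU : ∀ t ∈ Set.uIcc (0:ℝ) 1, HasDerivAt (fun s : ℝ => (s : ℂ) * g ((s : ℂ) * x))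
        (deriv g ((t : ℂ) * x) * t * x + g ((t : ℂ) * x)) t := by
      intro t ht
      have htx : ((t : ℂ) * x) ∈ unitDisk := hmapIcc t ht
      have hgd : HasDerivAt g (deriv g ((t : ℂ) * x)) ((t : ℂ) * x) :=
        (hg.differentiableAt (hopen.mem_nhds htx)).hasDerivAt
      have hinner : HasDerivAt (fun s : ℂ => s * x) x (t : ℂ) := by
        simpa using (hasDerivAt_id ((t : ℂ))).mul_const x
      have hcomp : HasDerivAt (fun s : ℂ => g (s * x)) (deriv g ((t : ℂ) * x) * x) (t : ℂ) :=
        hgd.comp ((t : ℂ)) hinner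
      have hprod := (hasDerivAt_id' ((t : ℂ))).mul hcomp
      have hfin := hprod.comp_ofReal
      exact hfin.congr_deriv (by ring)
    have h2 : ∫ t in (0:ℝ)..1, (deriv g ((t : ℂ) * x) * t * x + g ((t : ℂ) * x)) = g x := by
      rw [intervalIntegral.integral_eq_sub_of_hasDerivAt hU hcontF'.intervalIntegrable]
      simp
    rw [← h2]
    exact main.2
  · -- measurability of F y
    filter_upwards [Metric.ball_mem_nhds x hε0] with y hy
    apply ContinuousOn.aestronglyMeasurable _ measurableSet_uIoc
    apply ContinuousOn.mul _ continuousOn_const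
    apply hgc.comp (Complex.continuous_ofReal.mul continuous_const).continuousOn
    intro t ht
    rw [Set.uIoc_of_le (by norm_num : (0:ℝ) ≤ 1)] at ht
    exact hK (hball y hy t (abs_le.mpr ⟨by linarith [ht.1], ht.2⟩))
  · -- integrability of F x
    apply ContinuousOn.intervalIntegrable
    apply ContinuousOn.mul _ continuousOn_const
    exact hgc.comp hcontt.continuousOn hmapIcc
  · -- measurability of F' x
    exact (hcontF'.mono Set.uIoc_subset_uIcc).aestronglyMeasurable measurableSet_uIoc
  · -- bound
    apply MeasureTheory.ae_of_all
    intro t ht y hy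
    rw [Set.uIoc_of_le (by norm_num : (0:ℝ) ≤ 1)] at ht
    have ht1 : |t| ≤ 1 := abs_le.mpr ⟨by linarith [ht.1], ht.2⟩
    have hty : ((t : ℂ) * y) ∈ Metric.closedBall (0 : ℂ) ρ := hball y hy t ht1
    have hyρ : (norm : ℂ → ℝ) y ≤ ρ := by
      have h2 := mem_ball_iff_norm.mp hy
      have h3 := norm_sub_norm_le y x
      rw [hε] at h2
      rw [hρ]; linarith
    have b1 := hM' _ hty
    have b2 := hM _ hty
    have hM'0 : 0 ≤ M' := le_trans (norm_nonneg _) b1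
    calc ‖deriv g ((t : ℂ) * y) * t * y + g ((t : ℂ) * y)‖
        ≤ ‖deriv g ((t : ℂ) * y) * t * y‖ + ‖g ((t : ℂ) * y)‖ := norm_add_le _ _
      _ ≤ M' * 1 * ρ + M := by
          apply add_le_add _ b2
          rw [norm_mul, norm_mul]
          have h4 : ‖(t : ℂ)‖ ≤ 1 := by
            simpa using ht1
          have h5 : ‖y‖ ≤ ρ := by simpa using hyρ
          have n1 := norm_nonneg (deriv g ((t : ℂ) * y))
          have n3 := norm_nonneg y
          calc ‖deriv g ((t : ℂ) * y)‖ * ‖(t : ℂ)‖ * ‖y‖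
              ≤ (M' * 1) * ρ :=
                mul_le_mul (mul_le_mul b1 h4 (norm_nonneg _) hM'0) h5 n3
                  (mul_nonneg hM'0 zero_le_one)
            _ = M' * 1 * ρ := by ring
  · exact intervalIntegrable_const
  · -- differentiability in y
    apply MeasureTheory.ae_of_all
    intro t ht y hy
    rw [Set.uIoc_of_le (by norm_num : (0:ℝ) ≤ 1)] at ht
    have ht1 : |t| ≤ 1 := abs_le.mpr ⟨by linarith [ht.1], ht.2⟩
    have hty : ((t : ℂ) * y) ∈ unitDisk := hK (hball y hy t ht1)
    have hgd : HasDerivAt g (deriv g ((t : ℂ) * y)) ((t : ℂ) * y) :=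
      (hg.differentiableAt (hopen.mem_nhds hty)).hasDerivAt
    have hinner : HasDerivAt (fun u : ℂ => (t : ℂ) * u) (t : ℂ) y := by
      simpa using (hasDerivAt_id y).const_mul ((t : ℂ))
    have hcomp : HasDerivAt (fun u : ℂ => g ((t : ℂ) * u)) (deriv g ((t : ℂ) * y) * t) y :=
      hgd.comp _ hinner
    have hprod := hcomp.mul (hasDerivAt_id' y)
    exact hprod.congr_deriv (by ring)

open Complex Set Metric in
lemma rfun_nonneg {lam z : ℂ} (hlam : (norm : ℂ → ℝ) lam < 1) (hz : (norm : ℂ → ℝ) z < 1) :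
    0 ≤ rfun z lam := by
  unfold rfun
  have h0l := norm_nonneg lam
  have h0z := norm_nonneg z
  have ha2 : (norm : ℂ → ℝ) z ^ 2 < 1 := by nlinarith
  apply div_nonneg
  · exact mul_nonneg (by nlinarith) h0z
  · exact mul_nonneg (by linarith) (Xpos hlam hz).le

open Complex Set Metric in
lemma cfun_continuousOn (lam : ℂ) (hlam : (norm : ℂ → ℝ) lam < 1) :
    ContinuousOn (fun z => cfun z lam) unitDisk := by
  have habs : Continuous fun z : ℂ => ((norm : ℂ → ℝ) z : ℂ) :=
    Complex.continuous_ofReal.comp continuous_norm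
  have hconj : Continuous (starRingEnd ℂ) := continuous_conj
  have hre : Continuous fun z : ℂ => (((lam * z).re : ℝ) : ℂ) :=
    Complex.continuous_ofReal.comp (Complex.continuous_re.comp
      (continuous_const.mul continuous_id))
  apply ContinuousOn.div
  · exact (((habs.pow 2).mul (hconj.sub continuous_const)).mul continuous_const).sub
      (continuous_const.mul (continuous_const.sub
        (continuous_const.mul hconj))) |>.continuousOn
  · exact (((continuous_const.sub continuous_id).mul
      (continuous_const.sub (habs.pow 2))).mul
        ((continuous_const.add (habs.pow 2)).sub (continuous_const.mul hre))).continuousOn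
  · intro z hz
    have hza : (norm : ℂ → ℝ) z < 1 := by
      simpa using mem_ball_zero_iff.mp hz
    have h0z := norm_nonneg z
    have ha2 : (norm : ℂ → ℝ) z ^ 2 < 1 := by nlinarith
    have hfac2 : (1 : ℂ) - ((norm : ℂ → ℝ) z : ℂ) ^ 2 ≠ 0 := by
      have : (1 : ℂ) - ((norm : ℂ → ℝ) z : ℂ) ^ 2 = ((1 - (norm : ℂ → ℝ) z ^ 2 : ℝ) : ℂ) := by
        push_cast; ring
      rw [this]
      exact Complex.ofReal_ne_zero.mpr (by linarith)
    have hfac3 : (1 : ℂ) + ((norm : ℂ → ℝ) z : ℂ) ^ 2 - 2 * (((lam * z).re : ℝ) : ℂ) ≠ 0 := by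
      have : (1 : ℂ) + ((norm : ℂ → ℝ) z : ℂ) ^ 2 - 2 * (((lam * z).re : ℝ) : ℂ)
          = ((1 + (norm : ℂ → ℝ) z ^ 2 - 2 * (lam * z).re : ℝ) : ℂ) := by push_cast; ring
      rw [this]
      exact Complex.ofReal_ne_zero.mpr (Xpos hlam hza).ne'
    exact mul_ne_zero (mul_ne_zero (one_sub_ne hza) hfac2) hfac3

open Complex Set Metric in
lemma rfun_continuousOn (lam : ℂ) (hlam : (norm : ℂ → ℝ) lam < 1) :
    ContinuousOn (fun z => rfun z lam) unitDisk := by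
  apply ContinuousOn.div
  · exact (continuous_const.mul continuous_norm).continuousOn
  · exact ((continuous_const.sub (continuous_norm.pow 2)).mul
      ((continuous_const.add (continuous_norm.pow 2)).sub
        (continuous_const.mul (Complex.continuous_re.comp
          (continuous_const.mul continuous_id))))).continuousOn
  · intro z hz
    have hza : (norm : ℂ → ℝ) z < 1 := by
      simpa using mem_ball_zero_iff.mp hz
    have h0z := norm_nonneg z
    have ha2 : (norm : ℂ → ℝ) z ^ 2 < 1 := by nlinarith
    exact (mul_pos (by linarith) (Xpos hlam hza)).ne'

set_option maxHeartbeats 1000000 in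
theorem stmt10 (μ lam z₀ : ℂ) (hμ : 0 < μ.re) (hlam : ‖lam‖ < 1)
    (hz₀ : z₀ ∈ unitDisk) (γ : ℝ → ℂ) (hγ : ContDiff ℝ 1 γ)
    (hγD : ∀ t ∈ Set.Icc (0:ℝ) 1, γ t ∈ unitDisk)
    (hγ0 : γ 0 = 0) (hγ1 : γ 1 = z₀) :
    Vset μ lam z₀ ⊆
      Metric.closedBall
        (μ / (Real.pi : ℂ) * ∫ t in (0:ℝ)..1, cfun (γ t) lam * deriv γ t)
        (‖μ‖ / Real.pi * ∫ t in (0:ℝ)..1, rfun (γ t) lam * ‖(deriv γ t)‖) := by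
  intro W hW
  obtain ⟨f, hf, rfl⟩ := hW
  have h01 : (0:ℝ) ≤ 1 := by norm_num
  set g : ℂ → ℂ := fun y => deriv f y / f y with hgdef
  have hgD : DifferentiableOn ℂ g unitDisk :=
    (hf.1.1.deriv.differentiableOn).div hf.1.1.differentiableOn hf.1.2.1
  set F : ℂ → ℂ := fun u => ∫ t in (0:ℝ)..1, g ((t : ℂ) * u) * u with hFdef
  have hprim : ∀ y ∈ unitDisk, HasDerivAt F (g y) y := fun y hy =>
    hasDerivAt_primitive g hgD hy
  have hγmem : ∀ t ∈ Set.uIcc (0:ℝ) 1, γ t ∈ unitDisk := by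
    rw [Set.uIcc_of_le h01]; exact hγD
  have hγ'c : Continuous (deriv γ) := hγ.continuous_deriv le_rfl
  have hγc : Continuous γ := hγ.continuous
  have hLder : ∀ t ∈ Set.uIcc (0:ℝ) 1, HasDerivAt (F ∘ γ) (g (γ t) * deriv γ t) t := by
    intro t ht
    have h1 := hprim (γ t) (hγmem t ht)
    have h2 := (h1.hasFDerivAt.restrictScalars ℝ).comp_hasDerivAt t
      ((hγ.differentiable one_ne_zero t).hasDerivAt)
    simpa [mul_comm] using h2
  have hgcont : ContinuousOn g unitDisk := hgD.continuousOn
  have hggc : ContinuousOn (fun t => g (γ t) * deriv γ t) (Set.uIcc (0:ℝ) 1) :=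
    (hgcont.comp hγc.continuousOn hγmem).mul hγ'c.continuousOn
  have hItg : IntervalIntegrable (fun t => g (γ t) * deriv γ t) MeasureTheory.volume 0 1 :=
    hggc.intervalIntegrable
  have hFTC := intervalIntegral.integral_eq_sub_of_hasDerivAt hLder hItg
  have hF0 : F 0 = 0 := by rw [hFdef]; simp
  have hlog : logf f z₀ = ∫ t in (0:ℝ)..1, g (γ t) * deriv γ t := by
    rw [hFTC]
    simp only [Function.comp_apply, hγ0, hγ1, hF0, sub_zero]
    rfl
  have hcC : ContinuousOn (fun t => cfun (γ t) lam) (Set.uIcc (0:ℝ) 1) :=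
    (cfun_continuousOn lam hlam).comp hγc.continuousOn hγmem
  have hcint : IntervalIntegrable (fun t => cfun (γ t) lam * deriv γ t)
      MeasureTheory.volume 0 1 := (hcC.mul hγ'c.continuousOn).intervalIntegrable
  have hrC : ContinuousOn (fun t => (norm : ℂ → ℝ) μ / Real.pi * rfun (γ t) lam
      * (norm : ℂ → ℝ) (deriv γ t)) (Set.uIcc (0:ℝ) 1) :=
    (continuousOn_const.mul ((rfun_continuousOn lam hlam).comp hγc.continuousOn hγmem)).mul
      (continuous_norm.comp hγ'c).continuousOn
  have hrint : IntervalIntegrable (fun t => (norm : ℂ → ℝ) μ / Real.pi * rfun (γ t) lam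
      * (norm : ℂ → ℝ) (deriv γ t)) MeasureTheory.volume 0 1 := hrC.intervalIntegrable
  rw [Metric.mem_closedBall, dist_eq_norm]
  have hμπc : μ / (Real.pi : ℂ) * (∫ t in (0:ℝ)..1, cfun (γ t) lam * deriv γ t)
      = ∫ t in (0:ℝ)..1, μ / (Real.pi : ℂ) * (cfun (γ t) lam * deriv γ t) :=
    (intervalIntegral.integral_const_mul _ _).symm
  rw [hlog, hμπc, ← intervalIntegral.integral_sub hItg (hcint.const_mul _)]
  have hpoint : ∀ t ∈ Set.uIoc (0:ℝ) 1,
      ‖g (γ t) * deriv γ t - μ / (Real.pi : ℂ) * (cfun (γ t) lam * deriv γ t)‖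
        ≤ (norm : ℂ → ℝ) μ / Real.pi * rfun (γ t) lam * (norm : ℂ → ℝ) (deriv γ t) := by
    intro t ht
    have htIcc : t ∈ Set.uIcc (0:ℝ) 1 := Set.uIoc_subset_uIcc ht
    have h3 : g (γ t) * deriv γ t - μ / (Real.pi : ℂ) * (cfun (γ t) lam * deriv γ t)
        = (g (γ t) - μ / (Real.pi : ℂ) * cfun (γ t) lam) * deriv γ t := by ring
    rw [h3, norm_mul]
    have h4 := deriv_bound μ lam hμ hlam f hf (hγmem t htIcc)
    calc (norm : ℂ → ℝ) (g (γ t) - μ / (Real.pi : ℂ) * cfun (γ t) lam)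
          * (norm : ℂ → ℝ) (deriv γ t)
        ≤ ((norm : ℂ → ℝ) μ / Real.pi * rfun (γ t) lam) * (norm : ℂ → ℝ) (deriv γ t) :=
          mul_le_mul_of_nonneg_right h4 (norm_nonneg _)
      _ = (norm : ℂ → ℝ) μ / Real.pi * rfun (γ t) lam * (norm : ℂ → ℝ) (deriv γ t) := by ring
  have hbound := intervalIntegral.norm_integral_le_of_norm_le
    (μ := MeasureTheory.volume) (a := (0:ℝ)) (b := 1)
    (f := fun t => g (γ t) * deriv γ t - μ / (Real.pi : ℂ) * (cfun (γ t) lam * deriv γ t))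
    (g := fun t => (norm : ℂ → ℝ) μ / Real.pi * rfun (γ t) lam * (norm : ℂ → ℝ) (deriv γ t))
    h01 (MeasureTheory.ae_of_all _ (fun t ht => hpoint t (by rw [Set.uIoc_of_le h01]; exact ht)))
      hrint
  have hγab : ∀ t ∈ Set.Icc (0:ℝ) 1, (norm : ℂ → ℝ) (γ t) < 1 := fun t ht => by
    simpa using mem_ball_zero_iff.mp (hγD t ht)
  have hnn : 0 ≤ ∫ t in (0:ℝ)..1,
      (norm : ℂ → ℝ) μ / Real.pi * rfun (γ t) lam * (norm : ℂ → ℝ) (deriv γ t) := by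
    apply intervalIntegral.integral_nonneg h01
    intro t ht
    have h5 := rfun_nonneg hlam (hγab t ht)
    have hc0 : 0 ≤ (norm : ℂ → ℝ) μ / Real.pi := by positivity
    exact mul_nonneg (mul_nonneg hc0 h5) (norm_nonneg _)
  calc ‖∫ t in (0:ℝ)..1,
        (g (γ t) * deriv γ t - μ / (Real.pi : ℂ) * (cfun (γ t) lam * deriv γ t))‖
      ≤ |∫ t in (0:ℝ)..1,
          (norm : ℂ → ℝ) μ / Real.pi * rfun (γ t) lam * (norm : ℂ → ℝ) (deriv γ t)| := hbound.trans (le_abs_self _)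
    _ = ∫ t in (0:ℝ)..1,
          (norm : ℂ → ℝ) μ / Real.pi * rfun (γ t) lam * (norm : ℂ → ℝ) (deriv γ t) :=
        abs_of_nonneg hnn
    _ = (norm : ℂ → ℝ) μ / Real.pi
          * ∫ t in (0:ℝ)..1, rfun (γ t) lam * (norm : ℂ → ℝ) (deriv γ t) := by
        rw [← intervalIntegral.integral_const_mul]
        congr 1
        funext t
        ring
end

section
/- Let μ ∈ ℂ with Re μ > 0, |λ| < 1, and let a lie in the closed unit disk. Then the function H_{a,λ} belongs to F_μ(λ); in fact, for all z ∈ D, (2π/μ)·(z H_{a,λ}'(z)/H_{a,λ}(z)) + (1+z)/(1−z) = (1 + δ(az,λ)·z)/(1 − δ(az,λ)·z), where δ(w,λ) = (w + λ)/(1 + conj(λ)·w). -/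
open Complex Set Metric intervalIntegral

lemma normSq_key (lam w : ℂ) :
    Complex.normSq (1 + (starRingEnd ℂ) lam * w) - Complex.normSq (w + lam) =
      (1 - Complex.normSq lam) * (1 - Complex.normSq w) := by
  simp only [Complex.normSq_apply, Complex.add_re, Complex.add_im, Complex.mul_re,
    Complex.mul_im, Complex.conj_re, Complex.conj_im, Complex.one_re, Complex.one_im]
  ring

lemma denom_ne {lam w : ℂ} (hl : ‖lam‖ < 1) (hw : ‖w‖ < 1) :
    1 + (starRingEnd ℂ) lam * w ≠ 0 := by
  intro h
  have h1 : (starRingEnd ℂ) lam * w = -1 := by linear_combination h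
  have : ‖(starRingEnd ℂ) lam * w‖ = 1 := by rw [h1]; simp
  rw [norm_mul, Complex.norm_conj] at this
  nlinarith [norm_nonneg lam, norm_nonneg w]

lemma abs_dl_lt {lam w : ℂ} (hl : ‖lam‖ < 1) (hw : ‖w‖ < 1) :
    ‖dl lam w‖ < 1 := by
  have hd := denom_ne hl hw
  have hdpos : 0 < ‖1 + (starRingEnd ℂ) lam * w‖ := by
    simpa [norm_pos_iff] using hd
  rw [dl, norm_div, div_lt_one hdpos]
  apply lt_of_pow_lt_pow_left₀ 2 (norm_nonneg _)
  rw [Complex.sq_norm, Complex.sq_norm]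
  have hk := normSq_key lam w
  have h1 : Complex.normSq lam < 1 := by
    rw [← Complex.sq_norm]; nlinarith [norm_nonneg lam]
  have h2 : Complex.normSq w < 1 := by
    rw [← Complex.sq_norm]; nlinarith [norm_nonneg w]
  nlinarith

lemma re_pos_of_abs_lt_one {w : ℂ} (hw : ‖w‖ < 1) :
    0 < ((1 + w) / (1 - w)).re := by
  have hne : 1 - w ≠ 0 := by
    intro h
    have : w = 1 := by linear_combination -h
    simp [this] at hw
  have hns : 0 < Complex.normSq (1 - w) := Complex.normSq_pos.mpr hne
  have hw2 : Complex.normSq w < 1 := by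
    rw [← Complex.sq_norm]; nlinarith [norm_nonneg w]
  rw [Complex.div_re]
  have : (1 + w).re * (1 - w).re / Complex.normSq (1 - w)
      + (1 + w).im * (1 - w).im / Complex.normSq (1 - w)
      = (1 - Complex.normSq w) / Complex.normSq (1 - w) := by
    rw [← add_div]
    congr 1
    simp [Complex.normSq_apply]
    ring
  rw [this]
  exact div_pos (by linarith) hns

lemma contAux {g : ℂ → ℂ} (hg : ContinuousOn g (ball (0:ℂ) 1)) {x : ℂ} {t : ℝ}
    (hmem : (t:ℂ) * x ∈ ball (0:ℂ) 1) : ContinuousAt (fun s : ℝ => g ((s:ℂ) * x)) t :=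
  ContinuousAt.comp (x := t) (hg.continuousAt (isOpen_ball.mem_nhds hmem))
    ((Complex.continuous_ofReal.mul continuous_const).continuousAt)

/-- Key primitive lemma: for `h` differentiable on the unit disk, the function
`z ↦ ∫_0^1 h(tz) z dt` has derivative `h z` at every point of the disk. -/
lemma hasDerivAt_segment_integral {h : ℂ → ℂ}
    (hd : ∀ w ∈ ball (0 : ℂ) 1, DifferentiableAt ℂ h w) {z : ℂ}
    (hz : z ∈ ball (0 : ℂ) 1) :
    HasDerivAt (fun x => ∫ t in (0:ℝ)..1, h (t * x) * x) (h z) z := by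
  have hzn : ‖z‖ < 1 := by simpa [Complex.dist_eq] using hz
  have hDO : DifferentiableOn ℂ h (ball (0:ℂ) 1) :=
    fun w hw => (hd w hw).differentiableWithinAt
  have hA : AnalyticOnNhd ℂ h (ball (0:ℂ) 1) := hDO.analyticOnNhd isOpen_ball
  have hA' : AnalyticOnNhd ℂ (deriv h) (ball (0:ℂ) 1) := hA.deriv
  have hcont : ContinuousOn h (ball (0:ℂ) 1) := hA.continuousOn
  have hcont' : ContinuousOn (deriv h) (ball (0:ℂ) 1) := hA'.continuousOn
  set ε : ℝ := (1 - ‖z‖) / 2 with hε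
  have hεpos : 0 < ε := by rw [hε]; linarith
  set r : ℝ := (1 + ‖z‖) / 2 with hr
  have hr1 : r < 1 := by rw [hr]; linarith
  have hrpos : 0 ≤ r := by positivity
  -- membership facts
  have hmem : ∀ x : ℂ, x ∈ ball z ε → ∀ t : ℝ, |t| ≤ 1 → (t : ℂ) * x ∈ ball (0:ℂ) 1 := by
    intro x hx t ht
    have hxn : ‖x‖ < r := by
      have := mem_ball_iff_norm.mp hx
      have h2 : ‖x‖ ≤ ‖x - z‖ + ‖z‖ := by
        simpa using norm_add_le (x - z) z
      simp only [mem_ball, Complex.dist_eq] at hx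
      rw [hr]; rw [hε] at hx; linarith
    simp only [mem_ball, Complex.dist_eq, sub_zero, norm_mul, Complex.norm_real, Real.norm_eq_abs]
    nlinarith [norm_nonneg x, abs_nonneg t]
  have hmemz : ∀ t : ℝ, |t| ≤ 1 → (t : ℂ) * z ∈ ball (0:ℂ) 1 := by
    intro t ht
    simp only [mem_ball, Complex.dist_eq, sub_zero, norm_mul, Complex.norm_real, Real.norm_eq_abs]
    nlinarith [norm_nonneg z, abs_nonneg t]
  -- bounds on compact set
  obtain ⟨C₁, hC₁⟩ := (isCompact_closedBall (0:ℂ) r).exists_bound_of_continuousOn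
    (hcont.mono (fun w hw => by
      simp only [mem_closedBall, Complex.dist_eq, sub_zero] at hw
      exact mem_ball_zero_iff.mpr (lt_of_le_of_lt hw hr1)))
  obtain ⟨C₂, hC₂⟩ := (isCompact_closedBall (0:ℂ) r).exists_bound_of_continuousOn
    (hcont'.mono (fun w hw => by
      simp only [mem_closedBall, Complex.dist_eq, sub_zero] at hw
      exact mem_ball_zero_iff.mpr (lt_of_le_of_lt hw hr1)))
  have hC₁0 : 0 ≤ C₁ := le_trans (norm_nonneg _) (hC₁ 0 (by simp [hrpos]))
  have hC₂0 : 0 ≤ C₂ := le_trans (norm_nonneg _) (hC₂ 0 (by simp [hrpos]))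
  -- the derivative in x
  set F' : ℂ → ℝ → ℂ := fun x t => deriv h ((t:ℂ) * x) * t * x + h ((t:ℂ) * x) with hF'
  have hderiv : ∀ t : ℝ, |t| ≤ 1 → ∀ x ∈ ball z ε,
      HasDerivAt (fun x => h ((t:ℂ) * x) * x) (F' x t) x := by
    intro t ht x hx
    have h1 : HasDerivAt (fun x : ℂ => (t:ℂ) * x) (t:ℂ) x := by
      simpa using (hasDerivAt_id x).const_mul (t:ℂ)
    have h2 : HasDerivAt h (deriv h ((t:ℂ) * x)) ((t:ℂ) * x) :=
      (hd _ (hmem x hx t ht)).hasDerivAt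
    have h3 : HasDerivAt (fun x => h ((t:ℂ) * x)) (deriv h ((t:ℂ) * x) * t) x :=
      h2.comp x h1
    exact (h3.mul (hasDerivAt_id' x)).congr_deriv (by simp only [hF']; ring)
  have hball_abs : ∀ x ∈ ball z ε, ‖x‖ ≤ 1 := by
    intro x hx
    have := hmem x hx 1 (by norm_num)
    simp only [mem_ball, Complex.dist_eq, sub_zero, Complex.ofReal_one, one_mul] at this
    exact this.le
  -- now apply the dominated derivative theorem
  have key := intervalIntegral.hasDerivAt_integral_of_dominated_loc_of_deriv_le
    (F := fun x t => h ((t:ℂ) * x) * x) (F' := F') (x₀ := z)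
    (a := (0:ℝ)) (b := 1) (μ := MeasureTheory.volume) (bound := fun _ => C₂ + C₁)
    (ball_mem_nhds z hεpos)
    (by
      filter_upwards [ball_mem_nhds z hεpos] with x hx
      apply ContinuousOn.aestronglyMeasurable _ measurableSet_uIoc
      intro t htmem
      have ht : |t| ≤ 1 := by
        rw [Set.uIoc_of_le (by norm_num : (0:ℝ) ≤ 1)] at htmem
        rw [abs_le]; constructor <;> [linarith [htmem.1]; exact htmem.2]
      exact (contAux hcont (hmem x hx t ht)).continuousWithinAt.mul
        continuousWithinAt_const)
    (by
      apply ContinuousOn.intervalIntegrable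
      intro t htmem
      have ht : |t| ≤ 1 := by
        rw [Set.uIcc_of_le (by norm_num : (0:ℝ) ≤ 1)] at htmem
        rw [abs_le]; exact ⟨by linarith [htmem.1], htmem.2⟩
      exact (contAux hcont (hmemz t ht)).continuousWithinAt.mul
        continuousWithinAt_const)
    (by
      apply ContinuousOn.aestronglyMeasurable _ measurableSet_uIoc
      intro t htmem
      have ht : |t| ≤ 1 := by
        rw [Set.uIoc_of_le (by norm_num : (0:ℝ) ≤ 1)] at htmem
        rw [abs_le]; constructor <;> [linarith [htmem.1]; exact htmem.2]
      have hc1 : ContinuousWithinAt (fun t : ℝ => deriv h ((t:ℂ) * z)) (Set.uIoc (0:ℝ) 1) t :=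
        (contAux hcont' (hmemz t ht)).continuousWithinAt
      have hc2 : ContinuousWithinAt (fun t : ℝ => h ((t:ℂ) * z)) (Set.uIoc (0:ℝ) 1) t :=
        (contAux hcont (hmemz t ht)).continuousWithinAt
      exact (hc1.mul (Complex.continuous_ofReal.continuousWithinAt)).mul
        continuousWithinAt_const |>.add hc2)
    (by
      filter_upwards with t htmem x hx
      have ht : |t| ≤ 1 := by
        rw [Set.uIoc_of_le (by norm_num : (0:ℝ) ≤ 1)] at htmem
        rw [abs_le]; constructor <;> [linarith [htmem.1]; exact htmem.2]
      have hmem' := hmem x hx t ht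
      have habs : ‖(t:ℂ) * x‖ ≤ r := by
        have hxn : ‖x‖ ≤ 1 := hball_abs x hx
        simp only [mem_ball, Complex.dist_eq, sub_zero] at hmem'
        simp only [norm_mul, Complex.norm_real, Real.norm_eq_abs]
        calc |t| * ‖x‖ ≤ 1 * ‖x‖ := by
              apply mul_le_mul_of_nonneg_right ht (norm_nonneg x)
          _ = ‖x‖ := one_mul _
          _ ≤ r := by
              have h2 : ‖x‖ ≤ ‖x - z‖ + ‖z‖ := by
                simpa using norm_add_le (x - z) z
              simp only [mem_ball, Complex.dist_eq] at hx
              rw [hr]; rw [hε] at hx; linarith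
      have hK : (t:ℂ) * x ∈ closedBall (0:ℂ) r := by
        simpa [mem_closedBall, Complex.dist_eq] using habs
      have b1 := hC₂ _ hK
      have b2 := hC₁ _ hK
      calc ‖F' x t‖ ≤ ‖deriv h ((t:ℂ) * x) * t * x‖ + ‖h ((t:ℂ) * x)‖ := norm_add_le _ _
        _ ≤ C₂ + C₁ := by
            apply add_le_add _ b2
            have : ‖deriv h ((t:ℂ) * x) * (t:ℂ) * x‖
                = ‖deriv h ((t:ℂ) * x)‖ * |t| * ‖x‖ := by
              simp [norm_mul, Complex.norm_real, abs_mul]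
            rw [this]
            have hx1 : ‖x‖ ≤ 1 := hball_abs x hx
            have htx : |t| * ‖x‖ ≤ 1 := by nlinarith [abs_nonneg t, norm_nonneg x]
            calc ‖deriv h ((t:ℂ) * x)‖ * |t| * ‖x‖
                = ‖deriv h ((t:ℂ) * x)‖ * (|t| * ‖x‖) := by ring
              _ ≤ ‖deriv h ((t:ℂ) * x)‖ * 1 :=
                  mul_le_mul_of_nonneg_left htx (norm_nonneg _)
              _ = ‖deriv h ((t:ℂ) * x)‖ := mul_one _
              _ ≤ C₂ := b1)
    (by apply _root_.intervalIntegrable_const)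
    (by
      filter_upwards with t htmem x hx
      have ht : |t| ≤ 1 := by
        rw [Set.uIoc_of_le (by norm_num : (0:ℝ) ≤ 1)] at htmem
        rw [abs_le]; constructor <;> [linarith [htmem.1]; exact htmem.2]
      exact hderiv t ht x hx)
  -- key.2 : HasDerivAt ... (∫ t in 0..1, F' z t) z
  have hint_eq : (∫ t in (0:ℝ)..1, F' z t) = h z := by
    have hFTC : ∀ t ∈ Set.uIcc (0:ℝ) 1,
        HasDerivAt (fun s : ℝ => (s:ℂ) * h ((s:ℂ) * z)) (F' z t) t := by
      intro t htmem
      have ht : |t| ≤ 1 := by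
        rw [Set.uIcc_of_le (by norm_num : (0:ℝ) ≤ 1)] at htmem
        rw [abs_le]; exact ⟨by linarith [htmem.1], htmem.2⟩
      have h1 : HasDerivAt (fun w : ℂ => w * z) z (t:ℂ) := by
        simpa using (hasDerivAt_id (t:ℂ)).mul_const z
      have h2 : HasDerivAt h (deriv h ((t:ℂ) * z)) ((t:ℂ) * z) :=
        (hd _ (hmemz t ht)).hasDerivAt
      have h3 : HasDerivAt (fun w : ℂ => h (w * z)) (deriv h ((t:ℂ) * z) * z) (t:ℂ) :=
        h2.comp (t:ℂ) h1
      have h4 : HasDerivAt (fun w : ℂ => w * h (w * z))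
          (1 * h ((t:ℂ) * z) + (t:ℂ) * (deriv h ((t:ℂ) * z) * z)) (t:ℂ) :=
        (hasDerivAt_id (t:ℂ)).mul h3
      have h5 := h4.comp_ofReal
      convert h5 using 1
      simp only [hF']
      ring
    have hint : IntervalIntegrable (F' z) MeasureTheory.volume 0 1 := by
      apply ContinuousOn.intervalIntegrable
      intro t htmem
      have ht : |t| ≤ 1 := by
        rw [Set.uIcc_of_le (by norm_num : (0:ℝ) ≤ 1)] at htmem
        rw [abs_le]; exact ⟨by linarith [htmem.1], htmem.2⟩
      have hc1 : ContinuousWithinAt (fun t : ℝ => deriv h ((t:ℂ) * z)) (Set.uIcc (0:ℝ) 1) t :=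
        (contAux hcont' (hmemz t ht)).continuousWithinAt
      have hc2 : ContinuousWithinAt (fun t : ℝ => h ((t:ℂ) * z)) (Set.uIcc (0:ℝ) 1) t :=
        (contAux hcont (hmemz t ht)).continuousWithinAt
      exact (hc1.mul (Complex.continuous_ofReal.continuousWithinAt)).mul
        continuousWithinAt_const |>.add hc2
    have := intervalIntegral.integral_eq_sub_of_hasDerivAt hFTC hint
    rw [this]
    simp
  have := key.2
  rw [hint_eq] at this
  exact this

theorem stmt14 (μ lam a : ℂ) (hμ : 0 < μ.re) (hlam : ‖lam‖ < 1)
    (ha : ‖a‖ ≤ 1) :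
    memFlam μ lam (Hfun μ lam a) ∧
    ∀ z ∈ unitDisk,
      2 * (Real.pi : ℂ) / μ * (z * deriv (Hfun μ lam a) z / Hfun μ lam a z)
          + (1 + z) / (1 - z) =
        (1 + dl lam (a * z) * z) / (1 - dl lam (a * z) * z) := by
  have hπ : (Real.pi : ℂ) ≠ 0 := Complex.ofReal_ne_zero.mpr Real.pi_ne_zero
  have hμ0 : μ ≠ 0 := by intro h; rw [h] at hμ; simp at hμ
  have one_sub_ne : ∀ u : ℂ, ‖u‖ < 1 → 1 - u ≠ 0 := by
    intro u hu h
    have : u = 1 := by linear_combination -h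
    simp [this] at hu
  set h : ℂ → ℂ := fun w =>
    (dl lam (a * w) - 1) / ((1 - dl lam (a * w) * w) * (1 - w)) with hh
  have habsaw : ∀ w : ℂ, ‖w‖ < 1 → ‖a * w‖ < 1 := by
    intro w hw
    rw [norm_mul]
    nlinarith [norm_nonneg a, norm_nonneg w]
  have habsd : ∀ w : ℂ, ‖w‖ < 1 → ‖dl lam (a * w)‖ < 1 :=
    fun w hw => abs_dl_lt hlam (habsaw w hw)
  have habsdw : ∀ w : ℂ, ‖w‖ < 1 → ‖dl lam (a * w) * w‖ < 1 := by
    intro w hw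
    rw [norm_mul]
    nlinarith [norm_nonneg (dl lam (a * w)), norm_nonneg w, habsd w hw]
  have hden2 : ∀ w : ℂ, ‖w‖ < 1 → 1 - dl lam (a * w) * w ≠ 0 :=
    fun w hw => one_sub_ne _ (habsdw w hw)
  have hden3 : ∀ w : ℂ, ‖w‖ < 1 → (1 : ℂ) - w ≠ 0 :=
    fun w hw => one_sub_ne _ hw
  have hdl : ∀ w ∈ ball (0:ℂ) 1, DifferentiableAt ℂ (fun w => dl lam (a * w)) w := by
    intro w hw
    rw [mem_ball_zero_iff] at hw
    have h1 : DifferentiableAt ℂ (fun w : ℂ => a * w + lam) w := by fun_prop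
    have h2 : DifferentiableAt ℂ (fun w : ℂ => 1 + (starRingEnd ℂ) lam * (a * w)) w := by
      fun_prop
    exact h1.div h2 (denom_ne hlam (habsaw w hw))
  have hdiffh : ∀ w ∈ ball (0:ℂ) 1, DifferentiableAt ℂ h w := by
    intro w hw
    have hw' : ‖w‖ < 1 := by rwa [mem_ball_zero_iff] at hw
    refine DifferentiableAt.div ((hdl w hw).sub (differentiableAt_const 1)) ?_ ?_
    · exact ((differentiableAt_const 1).sub ((hdl w hw).mul differentiableAt_id)).mul
        ((differentiableAt_const 1).sub differentiableAt_id)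
    · exact mul_ne_zero (hden2 w hw') (hden3 w hw')
  have hHlog : ∀ z ∈ ball (0:ℂ) 1,
      HasDerivAt (Hlog μ lam a) (μ / (Real.pi : ℂ) * h z) z := by
    intro z hz
    have : Hlog μ lam a = fun z => μ / (Real.pi : ℂ) * ∫ t in (0:ℝ)..1, h (t * z) * z := rfl
    rw [this]
    exact (hasDerivAt_segment_integral hdiffh hz).const_mul (μ / (Real.pi : ℂ))
  have hHfun : ∀ z ∈ ball (0:ℂ) 1,
      HasDerivAt (Hfun μ lam a) (Hfun μ lam a z * (μ / (Real.pi : ℂ) * h z)) z := by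
    intro z hz
    exact (hHlog z hz).cexp
  have hHne : ∀ z : ℂ, Hfun μ lam a z ≠ 0 := fun z => Complex.exp_ne_zero _
  have hmain : ∀ z ∈ unitDisk,
      2 * (Real.pi : ℂ) / μ * (z * deriv (Hfun μ lam a) z / Hfun μ lam a z)
          + (1 + z) / (1 - z) =
        (1 + dl lam (a * z) * z) / (1 - dl lam (a * z) * z) := by
    intro z hz
    have hz' : ‖z‖ < 1 := by rwa [unitDisk, mem_ball_zero_iff] at hz
    rw [(hHfun z hz).deriv]
    have e2 := hden2 z hz'
    have e3 := hden3 z hz'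
    have eH := hHne z
    rw [hh]
    simp only
    set d := dl lam (a * z) with hd
    set H := Hfun μ lam a z with hH
    have hA : z * (H * (μ / (Real.pi : ℂ) * ((d - 1) / ((1 - d * z) * (1 - z))))) / H
        = z * (μ / (Real.pi : ℂ) * ((d - 1) / ((1 - d * z) * (1 - z)))) := by
      rw [div_eq_iff eH]; ring
    rw [hA]
    have hB : 2 * (Real.pi : ℂ) / μ *
          (z * (μ / (Real.pi : ℂ) * ((d - 1) / ((1 - d * z) * (1 - z)))))
        = 2 * z * (d - 1) / ((1 - d * z) * (1 - z)) := by
      rw [eq_div_iff (mul_ne_zero e2 e3)]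
      have e2' : 1 - z * d ≠ 0 := by rw [mul_comm]; exact e2
      field_simp
    rw [hB, div_add_div _ _ (mul_ne_zero e2 e3) e3,
      div_eq_div_iff (mul_ne_zero (mul_ne_zero e2 e3) e3) e2]
    ring
  refine ⟨⟨⟨?_, fun z _ => hHne z, ?_, ?_⟩, ?_⟩, hmain⟩
  · have hDO : DifferentiableOn ℂ (Hfun μ lam a) (ball (0:ℂ) 1) :=
      fun z hz => ((hHfun z hz).differentiableAt).differentiableWithinAt
    exact hDO.analyticOnNhd isOpen_ball
  · simp [Hfun, Hlog]
  · intro z hz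
    have hz' : ‖z‖ < 1 := by rwa [unitDisk, mem_ball_zero_iff] at hz
    have : Pfun μ (Hfun μ lam a) z
        = (1 + dl lam (a * z) * z) / (1 - dl lam (a * z) * z) := hmain z hz
    rw [this]
    exact re_pos_of_abs_lt_one (habsdw z hz')
  · rw [(hHfun 0 (by simp)).deriv]
    have h0 : Hfun μ lam a 0 = 1 := by simp [Hfun, Hlog]
    rw [h0, hh]
    simp [dl]
end

section
/- Let |λ| < 1 and define h(z) = 2·∫₀^z ζ/(1 − λζ)² dζ for z ∈ D. Then h is analytic on D with a zero of order two at the origin (h(z) = z² + higher order terms), it satisfies Re(1 + z h''(z)/h'(z)) > 0 for all z ∈ D, and h(z₀) ≠ 0 for every z₀ ∈ D \ {0}. -/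
open Complex Set Metric

/-- `h(z) = 2·∫₀^z ζ/(1 − λζ)² dζ` (integral over the segment from `0` to `z`). -/
noncomputable def hcur (lam z : ℂ) : ℂ :=
  2 * ∫ t in (0:ℝ)..1, t * z / (1 - lam * (t * z)) ^ 2 * z


open intervalIntegral

noncomputable def hclosed16 (lam z : ℂ) : ℂ :=
  2 / lam ^ 2 * (Complex.log (1 - lam * z) + lam * z / (1 - lam * z))

lemma small16 (lam z : ℂ) (hlam : ‖lam‖ < 1) (hz : ‖z‖ < 1)
    (t : ℝ) (ht : t ∈ Set.uIcc (0:ℝ) 1) : ‖(lam * ((t:ℂ) * z))‖ < 1 := by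
  rw [Set.uIcc_of_le (by norm_num)] at ht
  have h1 : ‖((t:ℂ))‖ ≤ 1 := by
    rw [Complex.norm_real, Real.norm_eq_abs]; rw [abs_le]; exact ⟨by linarith [ht.1], ht.2⟩
  calc ‖(lam * ((t:ℂ) * z))‖ = ‖lam‖ * (‖(t:ℂ)‖ * ‖z‖) := by
        rw [norm_mul, norm_mul]
    _ ≤ 1 * (1 * ‖z‖) :=
        mul_le_mul hlam.le (mul_le_mul h1 le_rfl (norm_nonneg z) zero_le_one)
          (by positivity) zero_le_one
    _ < 1 := by simpa using hz

lemma den_ne16 (lam w : ℂ) (h : ‖(lam * w)‖ < 1) : 1 - lam * w ≠ 0 := by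
  intro hc
  have : lam * w = 1 := by linear_combination -hc
  rw [this] at h; simp at h

lemma abs_mul_lt_one16 (lam z : ℂ) (hlam : ‖lam‖ < 1) (hz : ‖z‖ < 1) :
    ‖(lam * z)‖ < 1 := by
  rw [norm_mul]
  have h0 : (0:ℝ) ≤ ‖lam‖ := norm_nonneg lam
  have h1 : (0:ℝ) ≤ ‖z‖ := norm_nonneg z
  nlinarith

lemma hc_deriv16 (lam : ℂ) (hl : lam ≠ 0) (ζ : ℂ) (h : ‖(lam * ζ)‖ < 1) :
    HasDerivAt (hclosed16 lam) (2 * ζ / (1 - lam * ζ) ^ 2) ζ := by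
  have hs : 1 - lam * ζ ∈ Complex.slitPlane := by
    have := Complex.mem_slitPlane_of_norm_lt_one (z := -(lam*ζ)) (by simpa using h)
    simpa [sub_eq_add_neg] using this
  have n0 : 1 - lam * ζ ≠ 0 := Complex.slitPlane_ne_zero hs
  have hd : HasDerivAt (fun z : ℂ => 1 - lam * z) (-lam) ζ := by
    simpa using ((hasDerivAt_id ζ).const_mul lam).const_sub 1
  have hL : HasDerivAt (fun z => Complex.log (1 - lam * z)) ((1 - lam*ζ)⁻¹ * (-lam)) ζ :=
    by have := (Complex.hasDerivAt_log hs).comp ζ hd; exact this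
  have hN : HasDerivAt (fun z : ℂ => lam * z) lam ζ := by
    simpa using (hasDerivAt_id ζ).const_mul lam
  have hM : HasDerivAt (fun z => lam * z / (1 - lam * z))
      ((lam * (1 - lam*ζ) - lam * ζ * (-lam)) / (1 - lam*ζ)^2) ζ := hN.div hd n0
  have := ((hL.add hM).const_mul (2 / lam ^ 2))
  refine this.congr_deriv ?_
  field_simp
  ring

lemma eqh16 (lam : ℂ) (hl : lam ≠ 0) (hlam : ‖lam‖ < 1) (z : ℂ)
    (hz : ‖z‖ < 1) : hcur lam z = hclosed16 lam z := by
  have key := intervalIntegral.integral_eq_sub_of_hasDerivAt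
      (f := fun t : ℝ => hclosed16 lam ((t:ℂ) * z))
      (f' := fun t : ℝ => (2 : ℂ) * ((t:ℂ) * z / (1 - lam * ((t:ℂ) * z)) ^ 2 * z))
      (a := 0) (b := 1)
      (by
        intro t ht
        have h1 : ‖(lam * ((t:ℂ) * z))‖ < 1 := small16 lam z hlam hz t ht
        have hcomp : HasDerivAt (fun ζ : ℂ => hclosed16 lam (ζ * z))
            (2 * ((t:ℂ) * z) / (1 - lam * ((t:ℂ)*z)) ^ 2 * z) (t:ℂ) :=
          by have := (hc_deriv16 lam hl ((t:ℂ)*z) h1).comp (t:ℂ) (hasDerivAt_mul_const z); exact this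
        have := hcomp.comp_ofReal
        refine this.congr_deriv ?_
        ring)
      (by
        apply ContinuousOn.intervalIntegrable
        apply ContinuousOn.mul continuousOn_const
        apply ContinuousOn.mul ?_ continuousOn_const
        apply ContinuousOn.div
        · fun_prop
        · fun_prop
        · intro t ht
          exact pow_ne_zero 2 (den_ne16 _ _ (small16 lam z hlam hz t ht)))
  have h0 : hclosed16 lam 0 = 0 := by simp [hclosed16]
  rw [hcur, ← intervalIntegral.integral_const_mul, key]
  simp [h0]

lemma hcur_zero16 : hcur 0 = fun z : ℂ => z ^ 2 := by
  funext z
  have : ∀ t : ℝ, (t:ℂ) * z / (1 - (0:ℂ) * ((t:ℂ) * z)) ^ 2 * z = (t:ℂ) * (z * z) := by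
    intro t; simp; ring
  rw [hcur]
  simp only [this]
  rw [intervalIntegral.integral_mul_const, intervalIntegral.integral_ofReal, integral_id]
  norm_num
  ring

lemma Flem16 (u : ℂ) (hu : 0 < u.re) (hu1 : u ≠ 1) : u - 1 - Complex.log u ≠ 0 := by
  set d := u - 1 with hd
  have hdne : d ≠ 0 := sub_ne_zero.mpr hu1
  have hre : ∀ t : ℝ, t ∈ Set.Icc (0:ℝ) 1 → 0 < (1 + (t:ℂ) * d).re := by
    intro t ht
    have : (1 + (t:ℂ) * d).re = 1 - t + t * u.re := by
      simp [hd, Complex.add_re, Complex.mul_re, Complex.sub_re]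
      ring
    rw [this]
    nlinarith [mul_nonneg ht.1 hu.le, mul_nonneg (sub_nonneg.mpr ht.2) hu.le, hu, ht.1, ht.2]
  have hne : ∀ t : ℝ, t ∈ Set.Icc (0:ℝ) 1 → (1 + (t:ℂ) * d) ≠ 0 := by
    intro t ht h0
    have := hre t ht
    rw [h0] at this; simp at this
  have hslit : ∀ t : ℝ, t ∈ Set.Icc (0:ℝ) 1 → (1 + (t:ℂ) * d) ∈ Complex.slitPlane := by
    intro t ht
    exact Complex.mem_slitPlane_iff.mpr (Or.inl (hre t ht))
  have key := intervalIntegral.integral_eq_sub_of_hasDerivAt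
      (f := fun t : ℝ => (1 + (t:ℂ) * d) - 1 - Complex.log (1 + (t:ℂ) * d))
      (f' := fun t : ℝ => d ^ 2 * ((t:ℂ) / (1 + (t:ℂ) * d)))
      (a := 0) (b := 1)
      (by
        intro t ht
        rw [Set.uIcc_of_le (by norm_num)] at ht
        have hE : HasDerivAt (fun ζ : ℂ => (1 + ζ * d) - 1 - Complex.log (1 + ζ * d))
            (d - (1 + (t:ℂ)*d)⁻¹ * d) (t:ℂ) := by
          have h1 : HasDerivAt (fun ζ : ℂ => 1 + ζ * d) d (t:ℂ) := by
            simpa using (hasDerivAt_mul_const d).const_add 1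
          have h2 : HasDerivAt (fun ζ : ℂ => Complex.log (1 + ζ * d))
              ((1 + (t:ℂ)*d)⁻¹ * d) (t:ℂ) :=
            by have := (Complex.hasDerivAt_log (hslit t ht)).comp (t:ℂ) h1; exact this
          exact ((h1.sub_const 1).sub h2)
        have := hE.comp_ofReal
        refine this.congr_deriv ?_
        have hn := hne t ht
        have hn' : 1 + d * (t:ℂ) ≠ 0 := by rw [mul_comm]; exact hn
        field_simp
        ring)
      (by
        apply ContinuousOn.intervalIntegrable
        apply ContinuousOn.mul continuousOn_const
        apply ContinuousOn.div (by fun_prop) (by fun_prop)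
        intro t ht
        rw [Set.uIcc_of_le (by norm_num)] at ht
        exact hne t ht)
  simp only [Complex.ofReal_one, Complex.ofReal_zero, one_mul, zero_mul, add_zero] at key
  rw [intervalIntegral.integral_const_mul, Complex.log_one] at key
  have hkey2 : d ^ 2 * ∫ t in (0:ℝ)..1, (t:ℂ) / (1 + (t:ℂ) * d) = u - 1 - Complex.log u := by
    rw [key]; simp [hd]
  rw [← hkey2]
  apply mul_ne_zero (pow_ne_zero 2 hdne)
  have hint : IntervalIntegrable (fun t : ℝ => (t:ℂ) / (1 + (t:ℂ) * d)) MeasureTheory.volume 0 1 := by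
    apply ContinuousOn.intervalIntegrable
    apply ContinuousOn.div (by fun_prop) (by fun_prop)
    intro t ht
    rw [Set.uIcc_of_le (by norm_num)] at ht
    exact hne t ht
  intro h0
  have hre0 : (∫ t in (0:ℝ)..1, (t:ℂ) / (1 + (t:ℂ) * d)).re = 0 := by rw [h0]; simp
  have hcomm := Complex.reCLM.intervalIntegral_comp_comm hint
  have hpos : 0 < ∫ t in (0:ℝ)..1, ((t:ℂ) / (1 + (t:ℂ) * d)).re := by
    apply intervalIntegral.intervalIntegral_pos_of_pos_on
    · apply ContinuousOn.intervalIntegrable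
      exact Complex.continuous_re.comp_continuousOn (by
        apply ContinuousOn.div (by fun_prop) (by fun_prop)
        intro t ht
        rw [Set.uIcc_of_le (by norm_num)] at ht
        exact hne t ht)
    · intro t ht
      have htm : t ∈ Set.Icc (0:ℝ) 1 := ⟨ht.1.le, ht.2.le⟩
      have h1 : ((t:ℂ) / (1 + (t:ℂ) * d)).re = t * ((1 + (t:ℂ)*d)⁻¹).re := by
        rw [div_eq_mul_inv]
        exact Complex.re_ofReal_mul t _
      rw [h1]
      apply mul_pos ht.1
      rw [Complex.inv_re]
      exact div_pos (hre t htm) (Complex.normSq_pos.mpr (hne t htm))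
    · norm_num
  rw [show (fun t:ℝ => ((t:ℂ) / (1 + (t:ℂ) * d)).re)
      = fun t:ℝ => Complex.reCLM ((t:ℂ) / (1 + (t:ℂ) * d)) from rfl, hcomm] at hpos
  rw [show Complex.reCLM (∫ t in (0:ℝ)..1, (t:ℂ) / (1 + (t:ℂ) * d))
      = (∫ t in (0:ℝ)..1, (t:ℂ) / (1 + (t:ℂ) * d)).re from rfl, hre0] at hpos
  exact lt_irrefl 0 hpos

lemma mem_disk_abs16 {z : ℂ} (hz : z ∈ unitDisk) : ‖z‖ < 1 := by
  simpa [unitDisk, Complex.dist_eq] using hz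

lemma ev_eq16 (lam : ℂ) (hl : lam ≠ 0) (hlam : ‖lam‖ < 1) {z : ℂ}
    (hz : z ∈ unitDisk) : hcur lam =ᶠ[nhds z] hclosed16 lam := by
  have hopen : IsOpen unitDisk := Metric.isOpen_ball
  filter_upwards [hopen.eventually_mem hz] with w hw
  exact eqh16 lam hl hlam w (mem_disk_abs16 hw)

lemma deriv1_16 (lam : ℂ) (hl : lam ≠ 0) (hlam : ‖lam‖ < 1) {z : ℂ}
    (hz : z ∈ unitDisk) : deriv (hcur lam) z = 2 * z / (1 - lam * z) ^ 2 := by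
  rw [(ev_eq16 lam hl hlam hz).deriv_eq]
  exact (hc_deriv16 lam hl z (abs_mul_lt_one16 lam z hlam (mem_disk_abs16 hz))).deriv

lemma deriv2_16 (lam : ℂ) (hl : lam ≠ 0) (hlam : ‖lam‖ < 1) {z : ℂ}
    (hz : z ∈ unitDisk) :
    deriv (deriv (hcur lam)) z = 2 * (1 + lam * z) / (1 - lam * z) ^ 3 := by
  have hopen : IsOpen unitDisk := Metric.isOpen_ball
  have hev : deriv (hcur lam) =ᶠ[nhds z] (fun w => 2 * w / (1 - lam * w) ^ 2) := by
    filter_upwards [hopen.eventually_mem hz] with w hw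
    exact deriv1_16 lam hl hlam hw
  rw [hev.deriv_eq]
  have n0 : 1 - lam * z ≠ 0 :=
    den_ne16 lam z (abs_mul_lt_one16 lam z hlam (mem_disk_abs16 hz))
  have hd : HasDerivAt (fun w : ℂ => 1 - lam * w) (-lam) z := by
    simpa using ((hasDerivAt_id z).const_mul lam).const_sub 1
  have hden : HasDerivAt (fun w : ℂ => (1 - lam * w) ^ 2)
      (2 * (1 - lam * z) ^ 1 * (-lam)) z := hd.pow 2
  have hnum : HasDerivAt (fun w : ℂ => 2 * w) 2 z := by
    simpa using (hasDerivAt_id z).const_mul 2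
  have := (hnum.div hden (pow_ne_zero 2 n0)).deriv
  rw [show (fun w : ℂ => 2 * w / (1 - lam * w) ^ 2) = (fun w : ℂ => 2 * w) / (fun w : ℂ => (1 - lam * w) ^ 2) from rfl, this]
  field_simp
  ring

lemma analytic16 (lam : ℂ) (hlam : ‖lam‖ < 1) :
    AnalyticOnNhd ℂ (hcur lam) unitDisk := by
  rcases eq_or_ne lam 0 with rfl | hl
  · rw [hcur_zero16]
    intro z _
    exact (analyticAt_id.pow 2)
  · intro z hz
    have habs := abs_mul_lt_one16 lam z hlam (mem_disk_abs16 hz)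
    have hs : 1 - lam * z ∈ Complex.slitPlane := by
      have := Complex.mem_slitPlane_of_norm_lt_one (z := -(lam*z)) (by simpa using habs)
      simpa [sub_eq_add_neg] using this
    have n0 : 1 - lam * z ≠ 0 := Complex.slitPlane_ne_zero hs
    have hinner : AnalyticAt ℂ (fun w : ℂ => 1 - lam * w) z :=
      analyticAt_const.sub (analyticAt_const.mul analyticAt_id)
    have hA : AnalyticAt ℂ (hclosed16 lam) z := by
      apply AnalyticAt.mul analyticAt_const
      exact (hinner.clog hs).add
        ((analyticAt_const.mul analyticAt_id).div hinner n0)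
    exact hA.congr (ev_eq16 lam hl hlam hz).symm

lemma re_pos_inv16 (lam z : ℂ) (habs : ‖(lam * z)‖ < 1) :
    0 < (2 / (1 - lam * z)).re := by
  have hre : 0 < (1 - lam * z).re := by
    have := Complex.abs_re_le_norm (lam * z)
    simp only [Complex.sub_re, Complex.one_re]
    have : (lam * z).re ≤ ‖(lam * z)‖ := Complex.re_le_norm _
    linarith
  have n0 : 1 - lam * z ≠ 0 := den_ne16 lam z habs
  rw [Complex.div_re]
  have h2 : (2:ℂ).re = 2 := by norm_num
  have h3 : (2:ℂ).im = 0 := by norm_num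
  rw [h2, h3]
  simp only [zero_mul, zero_div, add_zero]
  exact div_pos (by linarith) (Complex.normSq_pos.mpr n0)

theorem stmt16 (lam : ℂ) (hlam : ‖lam‖ < 1) :
    AnalyticOnNhd ℂ (hcur lam) unitDisk ∧
    hcur lam 0 = 0 ∧ deriv (hcur lam) 0 = 0 ∧ deriv (deriv (hcur lam)) 0 = 2 ∧
    (∀ z ∈ unitDisk, 0 < (1 + z * deriv (deriv (hcur lam)) z / deriv (hcur lam) z).re) ∧
    ∀ z₀ ∈ unitDisk, z₀ ≠ 0 → hcur lam z₀ ≠ 0 := by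
  have h0mem : (0:ℂ) ∈ unitDisk := by simp [unitDisk]
  have hval0 : hcur lam 0 = 0 := by simp [hcur]
  rcases eq_or_ne lam 0 with rfl | hl
  · -- lam = 0 : hcur 0 = z ^ 2
    have hder : deriv (hcur 0) = fun z : ℂ => 2 * z := by
      rw [hcur_zero16]
      funext z
      have : HasDerivAt (fun z : ℂ => z ^ 2) (2 * z) z := by
        simpa using hasDerivAt_pow 2 z
      exact this.deriv
    have hdder : deriv (deriv (hcur 0)) = fun _ : ℂ => 2 := by
      rw [hder]
      funext z
      have : HasDerivAt (fun z : ℂ => 2 * z) 2 z := by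
        simpa using (hasDerivAt_id z).const_mul (2:ℂ)
      exact this.deriv
    refine ⟨analytic16 0 hlam, hval0, by rw [hder]; simp, by rw [hdder], ?_, ?_⟩
    · intro z _
      rcases eq_or_ne z 0 with rfl | hz0
      · simp
      · rw [hdder, hder]
        have : z * 2 / (2 * z) = 1 := by
          field_simp
        rw [this]
        norm_num
    · intro z₀ _ hz0
      rw [hcur_zero16]
      exact pow_ne_zero 2 hz0
  · -- lam ≠ 0
    have hd0 : deriv (hcur lam) 0 = 0 := by
      rw [deriv1_16 lam hl hlam h0mem]; simp
    have hdd0 : deriv (deriv (hcur lam)) 0 = 2 := by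
      rw [deriv2_16 lam hl hlam h0mem]; simp
    refine ⟨analytic16 lam hlam, hval0, hd0, hdd0, ?_, ?_⟩
    · intro z hz
      rcases eq_or_ne z 0 with rfl | hz0
      · rw [hd0]
        simp
      · rw [deriv1_16 lam hl hlam hz, deriv2_16 lam hl hlam hz]
        have habs := abs_mul_lt_one16 lam z hlam (mem_disk_abs16 hz)
        have n0 : 1 - lam * z ≠ 0 := den_ne16 lam z habs
        have hsimp : 1 + z * (2 * (1 + lam * z) / (1 - lam * z) ^ 3)
            / (2 * z / (1 - lam * z) ^ 2) = 2 / (1 - lam * z) := by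
          have n0' : 1 - z * lam ≠ 0 := by rw [mul_comm]; exact n0
          field_simp
          ring
        rw [hsimp]
        exact re_pos_inv16 lam z habs
    · intro z₀ hz₀ hz0
      have habsz := mem_disk_abs16 hz₀
      have habs : ‖(lam * z₀)‖ < 1 := abs_mul_lt_one16 lam z₀ hlam habsz
      rw [eqh16 lam hl hlam z₀ habsz, hclosed16]
      set w := lam * z₀ with hwdef
      have hw0 : w ≠ 0 := mul_ne_zero hl hz0
      have h1w : 1 - w ≠ 0 := den_ne16 lam z₀ habs
      have hre1w : 0 < (1 - w).re := by
        have : w.re ≤ ‖w‖ := Complex.re_le_norm w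
        simp only [Complex.sub_re, Complex.one_re]
        linarith
      set u := (1 - w)⁻¹ with hudef
      have hu0 : u ≠ 0 := inv_ne_zero h1w
      have huinv : u⁻¹ = 1 - w := by rw [hudef, inv_inv]
      have hure : 0 < u.re := by
        rw [hudef, Complex.inv_re]
        exact div_pos hre1w (Complex.normSq_pos.mpr h1w)
      have hu1 : u ≠ 1 := by
        intro h
        rw [h, inv_one] at huinv
        apply hw0
        linear_combination huinv
      have harg : u.arg ≠ Real.pi := by
        intro h
        have := Complex.arg_eq_pi_iff.mp h
        linarith [this.1]
      have hlog : Complex.log (1 - w) = -Complex.log u := by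
        rw [← huinv, Complex.log_inv u harg]
      have hfrac : w / (1 - w) = u - 1 := by
        rw [← huinv]
        have hw : w = 1 - u⁻¹ := by rw [huinv]; ring
        rw [hw]
        field_simp
      rw [hlog, hfrac]
      apply mul_ne_zero (div_ne_zero two_ne_zero (pow_ne_zero 2 hl))
      have : -Complex.log u + (u - 1) = u - 1 - Complex.log u := by ring
      rw [this]
      exact Flem16 u hure hu1
end

section
/- Let μ ∈ ℂ with Re μ > 0, |λ| < 1, and z₀ ∈ D \ {0}. Then the map a ↦ log H_{a,λ}(z₀) is a non-constant analytic function of a on D; consequently it is an open mapping and the set {log H_{a,λ}(z₀) : |a| < 1} is an open subset of ℂ contained in V(z₀, λ). -/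
open Complex Set Metric

noncomputable section

set_option maxHeartbeats 2000000

namespace S17

open MeasureTheory intervalIntegral


def g (lam a ζ : ℂ) : ℂ := (dl lam (a*ζ) - 1)/((1 - dl lam (a*ζ)*ζ)*(1-ζ))
def du (lam a ζ : ℂ) : ℂ :=
  ζ*(1 - (starRingEnd ℂ) lam * lam)/(1 + (starRingEnd ℂ) lam*(a*ζ))^2
def ga' (lam a ζ : ℂ) : ℂ := du lam a ζ/(1 - dl lam (a*ζ)*ζ)^2
def duz (lam a ζ : ℂ) : ℂ :=
  a*(1 - (starRingEnd ℂ) lam * lam)/(1 + (starRingEnd ℂ) lam*(a*ζ))^2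
def gz' (lam a ζ : ℂ) : ℂ :=
  (duz lam a ζ * ((1 - dl lam (a*ζ)*ζ)*(1-ζ)) -
    (dl lam (a*ζ) - 1) *
      ((-(duz lam a ζ*ζ + dl lam (a*ζ)*1))*(1-ζ) + (1 - dl lam (a*ζ)*ζ)*(-1))) /
    ((1 - dl lam (a*ζ)*ζ)*(1-ζ))^2

variable {lam a z z₀ : ℂ}

lemma normSq_key (lam w : ℂ) :
    Complex.normSq (1 + (starRingEnd ℂ) lam * w) =
      Complex.normSq (w + lam) + (1 - Complex.normSq lam) * (1 - Complex.normSq w) := by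
  simp only [Complex.normSq_apply, Complex.add_re, Complex.add_im, Complex.mul_re,
    Complex.mul_im, Complex.one_re, Complex.one_im, Complex.conj_re, Complex.conj_im]
  ring

lemma normSq_lt_one (h : ‖lam‖ < 1) : Complex.normSq lam < 1 := by
  rw [Complex.normSq_eq_norm_sq]
  nlinarith [norm_nonneg lam]

lemma den_pos (hlam : ‖lam‖ < 1) {w : ℂ} (hw : ‖w‖ < 1) :
    0 < Complex.normSq (1 + (starRingEnd ℂ) lam * w) := by
  rw [normSq_key]
  have h1 : Complex.normSq lam < 1 := normSq_lt_one hlam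
  have h2 : Complex.normSq w < 1 := normSq_lt_one hw
  have := Complex.normSq_nonneg (w + lam)
  nlinarith

lemma den_ne (hlam : ‖lam‖ < 1) {w : ℂ} (hw : ‖w‖ < 1) :
    1 + (starRingEnd ℂ) lam * w ≠ 0 :=
  Complex.normSq_pos.mp (den_pos hlam hw)

lemma dl_lt_one (hlam : ‖lam‖ < 1) {w : ℂ} (hw : ‖w‖ < 1) : ‖dl lam w‖ < 1 := by
  have hd := den_pos hlam hw
  have hsq : ‖w + lam‖ ^ 2 < ‖1 + (starRingEnd ℂ) lam * w‖ ^ 2 := by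
    rw [Complex.sq_norm, Complex.sq_norm, normSq_key]
    have h1 : Complex.normSq lam < 1 := normSq_lt_one hlam
    have h2 : Complex.normSq w < 1 := normSq_lt_one hw
    nlinarith
  have hlt : ‖w + lam‖ < ‖1 + (starRingEnd ℂ) lam * w‖ :=
    lt_of_pow_lt_pow_left₀ 2 (norm_nonneg _) hsq
  rw [dl, norm_div]
  rw [div_lt_one (lt_of_le_of_lt (norm_nonneg _) hlt)]
  exact hlt

lemma normconj (x : ℂ) : ‖(starRingEnd ℂ) x‖ = ‖x‖ := by
  simp

lemma one_sub_ne {x : ℂ} (hx : ‖x‖ < 1) : (1:ℂ) - x ≠ 0 := by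
  intro h
  rw [sub_eq_zero] at h
  rw [← h] at hx
  simp at hx

lemma norm_aζ (ha : ‖a‖ ≤ 1) (hζ : ‖ζ‖ < 1) : ‖a * ζ‖ < 1 := by
  rw [norm_mul]
  calc ‖a‖ * ‖ζ‖ ≤ 1 * ‖ζ‖ := by gcongr
    _ < 1 := by simpa using hζ

lemma uζ_ne (hlam : ‖lam‖ < 1) (ha : ‖a‖ ≤ 1) (hζ : ‖ζ‖ < 1) :
    1 - dl lam (a*ζ)*ζ ≠ 0 := by
  apply one_sub_ne
  rw [norm_mul]
  calc ‖dl lam (a*ζ)‖ * ‖ζ‖ ≤ 1 * ‖ζ‖ := by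
        gcongr; exact le_of_lt (dl_lt_one hlam (norm_aζ ha hζ))
    _ < 1 := by simpa using hζ

lemma hasDerivAt_dl_a (hlam : ‖lam‖ < 1) (ha : ‖a‖ ≤ 1) (hζ : ‖ζ‖ < 1) :
    HasDerivAt (fun a => dl lam (a*ζ)) (du lam a ζ) a := by
  have h1 := den_ne hlam (norm_aζ ha hζ)
  have hnum : HasDerivAt (fun a : ℂ => a*ζ + lam) ζ a := by
    simpa using ((hasDerivAt_id a).mul_const ζ).add_const lam
  have hden : HasDerivAt (fun a : ℂ => 1 + (starRingEnd ℂ) lam*(a*ζ))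
      ((starRingEnd ℂ) lam * ζ) a := by
    have : HasDerivAt (fun a : ℂ => (starRingEnd ℂ) lam*(a*ζ)) ((starRingEnd ℂ) lam * ζ) a := by
      simpa using ((hasDerivAt_id a).mul_const ζ).const_mul ((starRingEnd ℂ) lam)
    simpa using this.const_add 1
  have := hnum.fun_div hden h1
  simp only [dl]
  refine this.congr_deriv ?_
  rw [du]
  congr 1
  ring

lemma hasDerivAt_g_a (hlam : ‖lam‖ < 1) (ha : ‖a‖ ≤ 1) (hζ : ‖ζ‖ < 1) :
    HasDerivAt (fun a => g lam a ζ) (ga' lam a ζ) a := by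
  have h2 := uζ_ne hlam ha hζ
  have h3 : (1:ℂ) - ζ ≠ 0 := one_sub_ne hζ
  have hdl := hasDerivAt_dl_a hlam ha hζ
  have hnum : HasDerivAt (fun a => dl lam (a*ζ) - 1) (du lam a ζ) a := hdl.sub_const 1
  have hden : HasDerivAt (fun a => (1 - dl lam (a*ζ)*ζ)*(1-ζ)) (-(du lam a ζ*ζ)*(1-ζ)) a := by
    exact (((hdl.mul_const ζ).const_sub 1).mul_const (1-ζ))
  have hD : (1 - dl lam (a*ζ)*ζ)*(1-ζ) ≠ 0 := mul_ne_zero h2 h3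
  have := hnum.fun_div hden hD
  simp only [g]
  refine this.congr_deriv ?_
  rw [ga']
  set U := dl lam (a*ζ) with hU
  set V := du lam a ζ with hV
  field_simp
  ring

lemma ga'_bound (hlam : ‖lam‖ < 1) {s : ℝ} (hs : s < 1) (ha : ‖a‖ ≤ 1) (hζ : ‖ζ‖ ≤ s) :
    ‖ga' lam a ζ‖ ≤ 2/(1-s)^4 := by
  have hs0 : 0 ≤ s := le_trans (norm_nonneg ζ) hζ
  have hζ1 : ‖ζ‖ < 1 := lt_of_le_of_lt hζ hs
  have hm : (0:ℝ) < 1 - s := by linarith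
  have hden1 : 1 - s ≤ ‖1 + (starRingEnd ℂ) lam*(a*ζ)‖ := by
    have h1 : ‖(starRingEnd ℂ) lam*(a*ζ)‖ ≤ s := by
      rw [norm_mul, norm_mul, normconj]
      calc ‖lam‖ * (‖a‖ * ‖ζ‖) ≤ 1 * (1 * s) := by gcongr <;> linarith
        _ = s := by ring
    calc 1 - s ≤ 1 - ‖(starRingEnd ℂ) lam*(a*ζ)‖ := by linarith
      _ = ‖(1:ℂ)‖ - ‖(starRingEnd ℂ) lam*(a*ζ)‖ := by simp
      _ ≤ ‖1 + (starRingEnd ℂ) lam*(a*ζ)‖ := by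
          simpa [sub_neg_eq_add] using norm_sub_norm_le (1:ℂ) (-((starRingEnd ℂ) lam*(a*ζ)))
  have hden2 : 1 - s ≤ ‖1 - dl lam (a*ζ)*ζ‖ := by
    have h1 : ‖dl lam (a*ζ)*ζ‖ ≤ s := by
      rw [norm_mul]
      calc ‖dl lam (a*ζ)‖ * ‖ζ‖ ≤ 1 * s := by
            gcongr; exact le_of_lt (dl_lt_one hlam (norm_aζ ha hζ1))
        _ = s := by ring
    calc 1 - s ≤ 1 - ‖dl lam (a*ζ)*ζ‖ := by linarith
      _ = ‖(1:ℂ)‖ - ‖dl lam (a*ζ)*ζ‖ := by simp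
      _ ≤ ‖1 - dl lam (a*ζ)*ζ‖ := norm_sub_norm_le _ _
  have hnum : ‖du lam a ζ‖ ≤ 2/(1-s)^2 := by
    rw [du, norm_div, norm_pow, norm_mul]
    have h1 : ‖ζ‖ * ‖1 - (starRingEnd ℂ) lam * lam‖ ≤ 2 := by
      have h2 : ‖1 - (starRingEnd ℂ) lam * lam‖ ≤ 2 := by
        calc ‖(1:ℂ) - (starRingEnd ℂ) lam * lam‖ ≤ ‖(1:ℂ)‖ + ‖(starRingEnd ℂ) lam * lam‖ :=
              norm_sub_le _ _
          _ ≤ 1 + 1 * 1 := by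
              rw [norm_one, norm_mul, normconj]; gcongr <;> linarith
          _ = 2 := by ring
      calc ‖ζ‖ * ‖1 - (starRingEnd ℂ) lam * lam‖ ≤ 1 * 2 :=
            mul_le_mul (by linarith) h2 (norm_nonneg _) (by norm_num)
        _ = 2 := by ring
    exact div_le_div₀ (by norm_num) h1 (by positivity) (pow_le_pow_left₀ hm.le hden1 2)
  calc ‖ga' lam a ζ‖ = ‖du lam a ζ‖/‖1 - dl lam (a*ζ)*ζ‖^2 := by
        rw [ga', norm_div, norm_pow]
    _ ≤ (2/(1-s)^2)/(1-s)^2 :=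
        div_le_div₀ (by positivity) hnum (by positivity) (pow_le_pow_left₀ hm.le hden2 2)
    _ = 2/(1-s)^4 := by field_simp [hm.ne']

lemma cont_dl (hlam : ‖lam‖ < 1) (ha : ‖a‖ ≤ 1) {s : ℝ} (hs : s < 1) :
    ContinuousOn (fun ζ => dl lam (a*ζ)) {ζ : ℂ | ‖ζ‖ ≤ s} := by
  simp only [dl]
  apply ContinuousOn.div (by fun_prop) (by fun_prop)
  intro ζ hζ
  exact den_ne hlam (norm_aζ ha (lt_of_le_of_lt hζ hs))

lemma cont_g (hlam : ‖lam‖ < 1) (ha : ‖a‖ ≤ 1) {s : ℝ} (hs : s < 1) :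
    ContinuousOn (fun ζ => g lam a ζ) {ζ : ℂ | ‖ζ‖ ≤ s} := by
  simp only [g]
  apply ContinuousOn.div ((cont_dl hlam ha hs).sub continuousOn_const)
  · exact (continuousOn_const.sub ((cont_dl hlam ha hs).mul continuousOn_id)).mul
      (continuousOn_const.sub continuousOn_id)
  · intro ζ hζ
    have hζ1 : ‖ζ‖ < 1 := lt_of_le_of_lt hζ hs
    exact mul_ne_zero (uζ_ne hlam ha hζ1) (one_sub_ne hζ1)

lemma cont_du (hlam : ‖lam‖ < 1) (ha : ‖a‖ ≤ 1) {s : ℝ} (hs : s < 1) :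
    ContinuousOn (fun ζ => du lam a ζ) {ζ : ℂ | ‖ζ‖ ≤ s} := by
  simp only [du]
  apply ContinuousOn.div (by fun_prop) (by fun_prop)
  intro ζ hζ
  exact pow_ne_zero 2 (den_ne hlam (norm_aζ ha (lt_of_le_of_lt hζ hs)))

lemma cont_ga' (hlam : ‖lam‖ < 1) (ha : ‖a‖ ≤ 1) {s : ℝ} (hs : s < 1) :
    ContinuousOn (fun ζ => ga' lam a ζ) {ζ : ℂ | ‖ζ‖ ≤ s} := by
  simp only [ga']
  apply ContinuousOn.div (cont_du hlam ha hs)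
  · exact (continuousOn_const.sub ((cont_dl hlam ha hs).mul continuousOn_id)).pow 2
  · intro ζ hζ
    exact pow_ne_zero 2 (uζ_ne hlam ha (lt_of_le_of_lt hζ hs))

lemma cont_comp {f : ℂ → ℂ} (hf : ContinuousOn f {ζ : ℂ | ‖ζ‖ ≤ ‖z‖}) :
    ContinuousOn (fun t : ℝ => f (↑t*z)) (Set.Icc 0 1) := by
  apply hf.comp (by fun_prop)
  intro t ht
  simp only [Set.mem_setOf_eq, norm_mul, Complex.norm_real]
  calc |t| * ‖z‖ ≤ 1 * ‖z‖ := by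
        gcongr
        rw [abs_le]; exact ⟨by linarith [ht.1], ht.2⟩
    _ = ‖z‖ := one_mul _

lemma aesm_of_contIcc {f : ℝ → ℂ} (hf : ContinuousOn f (Set.Icc 0 1)) :
    AEStronglyMeasurable f (volume.restrict (Set.uIoc (0:ℝ) 1)) := by
  apply ContinuousOn.aestronglyMeasurable (hf.mono ?_) measurableSet_uIoc
  rw [Set.uIoc_of_le zero_le_one]
  exact Set.Ioc_subset_Icc_self

lemma norm_lt_of_ball {a₀ : ℂ} (ha₀ : ‖a₀‖ < 1) (ha : a ∈ ball a₀ (1 - ‖a₀‖)) : ‖a‖ < 1 := by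
  rw [mem_ball, dist_eq_norm] at ha
  calc ‖a‖ = ‖a - a₀ + a₀‖ := by ring_nf
    _ ≤ ‖a - a₀‖ + ‖a₀‖ := norm_add_le _ _
    _ < 1 := by linarith

lemma hasDerivAt_int_a (hlam : ‖lam‖ < 1) (hz : ‖z‖ < 1) {a₀ : ℂ} (ha₀ : ‖a₀‖ < 1) :
    HasDerivAt (fun a => ∫ t in (0:ℝ)..1, g lam a (↑t*z)*z)
      (∫ t in (0:ℝ)..1, ga' lam a₀ (↑t*z)*z) a₀ := by
  have hball : ∀ᶠ a in nhds a₀, ‖a‖ < 1 := by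
    have : ball (0:ℂ) 1 ∈ nhds a₀ := isOpen_ball.mem_nhds (by simpa [mem_ball] using ha₀)
    exact Filter.eventually_iff_exists_mem.mpr ⟨_, this, fun a ha => by simpa [mem_ball] using ha⟩
  have htnorm : ∀ t ∈ Set.uIoc (0:ℝ) 1, ‖(↑t*z : ℂ)‖ < 1 := by
    intro t ht
    rw [Set.uIoc_of_le zero_le_one] at ht
    rw [norm_mul, Complex.norm_real]
    calc |t| * ‖z‖ ≤ 1 * ‖z‖ := by
          gcongr; rw [abs_le]; exact ⟨by linarith [ht.1.le], ht.2⟩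
      _ < 1 := by simpa using hz
  refine (intervalIntegral.hasDerivAt_integral_of_dominated_loc_of_deriv_le
    (F := fun a (t : ℝ) => g lam a ((t:ℂ)*z)*z) (F' := fun a (t : ℝ) => ga' lam a ((t:ℂ)*z)*z)
    (s := ball a₀ (1 - ‖a₀‖)) (bound := fun _ => 2/(1-‖z‖)^4 * ‖z‖)
    (ball_mem_nhds a₀ (by linarith)) ?_ ?_ ?_ ?_ ?_ ?_).2
  · exact hball.mono fun a ha =>
      aesm_of_contIcc ((cont_comp (cont_g hlam ha.le hz)).mul continuousOn_const)
  · apply ContinuousOn.intervalIntegrable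
    rw [Set.uIcc_of_le zero_le_one]
    exact (cont_comp (cont_g hlam ha₀.le hz)).mul continuousOn_const
  · exact aesm_of_contIcc ((cont_comp (cont_ga' hlam ha₀.le hz)).mul continuousOn_const)
  · apply Filter.Eventually.of_forall
    intro t ht a ha
    rw [norm_mul]
    have h1 : ‖(↑t*z : ℂ)‖ ≤ ‖z‖ := by
      rw [Set.uIoc_of_le zero_le_one] at ht
      rw [norm_mul, Complex.norm_real]
      calc |t| * ‖z‖ ≤ 1 * ‖z‖ := by
            gcongr; rw [abs_le]; exact ⟨by linarith [ht.1.le], ht.2⟩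
        _ = ‖z‖ := one_mul _
    exact mul_le_mul_of_nonneg_right
      (ga'_bound hlam hz (norm_lt_of_ball ha₀ ha).le h1) (norm_nonneg z)
  · exact intervalIntegrable_const
  · apply Filter.Eventually.of_forall
    intro t ht a ha
    exact (hasDerivAt_g_a hlam (norm_lt_of_ball ha₀ ha).le (htnorm t ht)).mul_const z

lemma tb_lt {b : ℂ} (hb : ‖b‖ < 1) {t : ℝ} (ht0 : 0 ≤ t) (ht1 : t ≤ 1) :
    ‖b * (↑t:ℂ)‖ < 1 := by
  rw [norm_mul, Complex.norm_real]
  calc ‖b‖ * |t| ≤ ‖b‖ * 1 := by gcongr; rw [abs_le]; constructor <;> linarith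
    _ < 1 := by simpa using hb

lemma key_pos {b : ℂ} (hb : ‖b‖ < 1) {t : ℝ} (ht0 : 0 < t) (ht1 : t < 1) :
    0 < ((1-b) * ((t:ℂ)/(1-b*(t:ℂ))^2)).re := by
  have hw : (1:ℂ) - b*(t:ℂ) ≠ 0 := one_sub_ne (tb_lt hb ht0.le ht1.le)
  have hb2 : b.re^2 + b.im^2 < 1 := by
    have := normSq_lt_one hb
    rw [Complex.normSq_apply] at this
    nlinarith
  have hrw : (1-b) * ((t:ℂ)/(1-b*(t:ℂ))^2) = ((1-b)*(t:ℂ))/((1-b*(t:ℂ))^2) := by ring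
  rw [hrw, Complex.div_re, ← add_div]
  apply div_pos
  · have hxlt : b.re < 1 := by nlinarith [sq_nonneg b.im]
    have hxgt : -1 < b.re := by nlinarith [sq_nonneg b.im]
    have hA : ((1-b)*(t:ℂ)).re * (((1-b*(t:ℂ))^2).re) + ((1-b)*(t:ℂ)).im * (((1-b*(t:ℂ))^2).im)
        = t*((1-b.re)*(1-b.re*t)^2) + b.im^2*t^2*(2-t-b.re*t) := by
      simp only [pow_two, Complex.mul_re, Complex.mul_im, Complex.sub_re, Complex.sub_im,
        Complex.one_re, Complex.one_im, Complex.ofReal_re, Complex.ofReal_im]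
      ring
    rw [hA]
    have hxt : 0 < 1 - b.re*t := by nlinarith
    have h1 : 0 < t*((1-b.re)*(1-b.re*t)^2) := by
      apply mul_pos ht0
      apply mul_pos (by linarith)
      positivity
    have h2 : 0 ≤ b.im^2*t^2*(2-t-b.re*t) := by
      apply mul_nonneg (by positivity)
      nlinarith
    linarith
  · exact Complex.normSq_pos.mpr (pow_ne_zero 2 hw)

lemma cont_K {b : ℂ} (hb : ‖b‖ < 1) :
    ContinuousOn (fun t : ℝ => (t:ℂ)/(1-b*(t:ℂ))^2) (Set.Icc 0 1) := by
  apply ContinuousOn.div (by fun_prop) (by fun_prop)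
  intro t ht
  exact pow_ne_zero 2 (one_sub_ne (tb_lt hb ht.1 ht.2))

lemma K_ne {b : ℂ} (hb : ‖b‖ < 1) : (∫ t in (0:ℝ)..1, (t:ℂ)/(1-b*(t:ℂ))^2) ≠ 0 := by
  set K := ∫ t in (0:ℝ)..1, (t:ℂ)/(1-b*(t:ℂ))^2 with hK
  have hcont : ContinuousOn (fun t : ℝ => (1-b)*((t:ℂ)/(1-b*(t:ℂ))^2)) (Set.Icc 0 1) :=
    continuousOn_const.mul (cont_K hb)
  have hint2 : IntervalIntegrable (fun t : ℝ => (1-b)*((t:ℂ)/(1-b*(t:ℂ))^2)) volume 0 1 := by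
    apply ContinuousOn.intervalIntegrable
    rw [Set.uIcc_of_le zero_le_one]; exact hcont
  have h1 : (1-b)*K = ∫ t in (0:ℝ)..1, (1-b)*((t:ℂ)/(1-b*(t:ℂ))^2) :=
    (intervalIntegral.integral_const_mul _ _).symm
  have h := Complex.reCLM.intervalIntegral_comp_comm hint2
  simp only [Complex.reCLM_apply] at h
  have h3 : 0 < ((1-b)*K).re := by
    rw [h1, ← h]
    apply intervalIntegral.intervalIntegral_pos_of_pos_on
    · apply ContinuousOn.intervalIntegrable
      rw [Set.uIcc_of_le zero_le_one]
      exact Complex.continuous_re.comp_continuousOn hcont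
    · intro t ht
      exact key_pos hb ht.1 ht.2
    · norm_num
  intro h0
  rw [h0, mul_zero] at h3
  simp at h3

lemma ga'0 (lam ζ : ℂ) : ga' lam 0 ζ = ζ*(1 - (starRingEnd ℂ) lam * lam)/(1 - lam*ζ)^2 := by
  simp [ga', du, dl]

lemma integral_ga'0 (hlam : ‖lam‖ < 1) (hz₀ : ‖z₀‖ < 1) :
    (∫ t in (0:ℝ)..1, ga' lam 0 ((t:ℂ)*z₀)*z₀)
      = (1 - (starRingEnd ℂ) lam * lam) * z₀^2 *
          ∫ t in (0:ℝ)..1, (t:ℂ)/(1-(lam*z₀)*(t:ℂ))^2 := by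
  rw [← intervalIntegral.integral_const_mul]
  apply intervalIntegral.integral_congr
  intro t ht
  rw [Set.uIcc_of_le zero_le_one] at ht
  have hlz : ‖lam * z₀‖ < 1 := by
    rw [norm_mul]; nlinarith [norm_nonneg lam, norm_nonneg z₀]
  have hne : ((1:ℂ) - lam*z₀*(t:ℂ)) ≠ 0 := one_sub_ne (tb_lt hlz ht.1 ht.2)
  have hne' : ((1:ℂ) - lam*((t:ℂ)*z₀)) ≠ 0 := by
    rw [show (1:ℂ) - lam*((t:ℂ)*z₀) = 1 - lam*z₀*(t:ℂ) by ring]; exact hne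
  simp only [ga'0]
  field_simp

lemma deriv0_ne (hlam : ‖lam‖ < 1) (hz₀ : ‖z₀‖ < 1) (h0 : z₀ ≠ 0) :
    (∫ t in (0:ℝ)..1, ga' lam 0 ((t:ℂ)*z₀)*z₀) ≠ 0 := by
  rw [integral_ga'0 hlam hz₀]
  have hlz : ‖lam * z₀‖ < 1 := by
    rw [norm_mul]; nlinarith [norm_nonneg lam, norm_nonneg z₀]
  apply mul_ne_zero (mul_ne_zero ?_ (pow_ne_zero 2 h0)) (K_ne hlz)
  have hc : ‖(starRingEnd ℂ) lam * lam‖ < 1 := by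
    rw [norm_mul, normconj]; nlinarith [norm_nonneg lam]
  exact one_sub_ne hc

lemma hasDerivAt_dl_z (hlam : ‖lam‖ < 1) (ha : ‖a‖ ≤ 1) {ζ : ℂ} (hζ : ‖ζ‖ < 1) :
    HasDerivAt (fun ζ => dl lam (a*ζ)) (duz lam a ζ) ζ := by
  have h1 := den_ne hlam (norm_aζ ha hζ)
  have hnum : HasDerivAt (fun ζ : ℂ => a*ζ + lam) a ζ := by
    simpa using ((hasDerivAt_id ζ).const_mul a).add_const lam
  have hden : HasDerivAt (fun ζ : ℂ => 1 + (starRingEnd ℂ) lam*(a*ζ))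
      ((starRingEnd ℂ) lam * a) ζ := by
    simpa using (((hasDerivAt_id ζ).const_mul a).const_mul ((starRingEnd ℂ) lam)).const_add 1
  have := hnum.fun_div hden h1
  simp only [dl]
  refine this.congr_deriv ?_
  rw [duz]
  congr 1
  ring

lemma hasDerivAt_g_z (hlam : ‖lam‖ < 1) (ha : ‖a‖ ≤ 1) {ζ : ℂ} (hζ : ‖ζ‖ < 1) :
    HasDerivAt (fun ζ => g lam a ζ) (gz' lam a ζ) ζ := by
  have h2 := uζ_ne hlam ha hζ
  have h3 : (1:ℂ) - ζ ≠ 0 := one_sub_ne hζ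
  have hdl := hasDerivAt_dl_z hlam ha hζ
  have hnum : HasDerivAt (fun ζ => dl lam (a*ζ) - 1) (duz lam a ζ) ζ := hdl.sub_const 1
  have hd1 : HasDerivAt (fun ζ => 1 - dl lam (a*ζ)*ζ)
      (-(duz lam a ζ*ζ + dl lam (a*ζ)*1)) ζ := (hdl.mul (hasDerivAt_id ζ)).const_sub 1
  have hd2 : HasDerivAt (fun ζ : ℂ => 1 - ζ) (-1) ζ := by
    simpa using (hasDerivAt_id ζ).const_sub 1
  have hden := hd1.mul hd2
  have := hnum.div hden (mul_ne_zero h2 h3)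
  simp only [g]
  exact this

lemma compact_bound {f : ℂ → ℂ} {s : ℝ} (hs0 : 0 ≤ s)
    (hf : ContinuousOn f {ζ : ℂ | ‖ζ‖ ≤ s}) :
    ∃ C : ℝ, 0 ≤ C ∧ ∀ ζ : ℂ, ‖ζ‖ ≤ s → ‖f ζ‖ ≤ C := by
  have hset : {ζ : ℂ | ‖ζ‖ ≤ s} = Metric.closedBall 0 s := by
    ext ζ; simp [Metric.mem_closedBall, dist_zero_right]
  rw [hset] at hf
  obtain ⟨C, hC⟩ := (isCompact_closedBall (0:ℂ) s).exists_bound_of_continuousOn hf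
  refine ⟨C, ?_, fun ζ hζ => hC ζ (by simpa [Metric.mem_closedBall, dist_zero_right] using hζ)⟩
  exact le_trans (norm_nonneg (f 0)) (hC 0 (by simp [Metric.mem_closedBall, hs0]))

lemma cont_duz (hlam : ‖lam‖ < 1) (ha : ‖a‖ ≤ 1) {s : ℝ} (hs : s < 1) :
    ContinuousOn (fun ζ => duz lam a ζ) {ζ : ℂ | ‖ζ‖ ≤ s} := by
  simp only [duz]
  apply ContinuousOn.div (by fun_prop) (by fun_prop)
  intro ζ hζ
  exact pow_ne_zero 2 (den_ne hlam (norm_aζ ha (lt_of_le_of_lt hζ hs)))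

lemma cont_gz' (hlam : ‖lam‖ < 1) (ha : ‖a‖ ≤ 1) {s : ℝ} (hs : s < 1) :
    ContinuousOn (fun ζ => gz' lam a ζ) {ζ : ℂ | ‖ζ‖ ≤ s} := by
  simp only [gz']
  have cdl := cont_dl hlam ha hs
  have cduz := cont_duz hlam ha hs
  apply ContinuousOn.div
  · exact (cduz.mul ((continuousOn_const.sub (cdl.mul continuousOn_id)).mul
      (continuousOn_const.sub continuousOn_id))).sub ((cdl.sub continuousOn_const).mul
      ((((cduz.mul continuousOn_id).add (cdl.mul continuousOn_const)).neg.mul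
        (continuousOn_const.sub continuousOn_id)).add
        ((continuousOn_const.sub (cdl.mul continuousOn_id)).mul continuousOn_const)))
  · exact ((continuousOn_const.sub (cdl.mul continuousOn_id)).mul
      (continuousOn_const.sub continuousOn_id)).pow 2
  · intro ζ hζ
    have hζ1 : ‖ζ‖ < 1 := lt_of_le_of_lt hζ hs
    exact pow_ne_zero 2 (mul_ne_zero (uζ_ne hlam ha hζ1) (one_sub_ne hζ1))

lemma integral_Fz (hlam : ‖lam‖ < 1) (ha : ‖a‖ ≤ 1) (hz : ‖z‖ < 1) :
    (∫ t in (0:ℝ)..1, ((gz' lam a ((t:ℂ)*z)*(t:ℂ))*z + g lam a ((t:ℂ)*z)))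
      = g lam a z := by
  have key : ∀ t ∈ Set.uIcc (0:ℝ) 1,
      HasDerivAt (fun t : ℝ => (t:ℂ) * g lam a ((t:ℂ)*z))
        ((gz' lam a ((t:ℂ)*z)*(t:ℂ))*z + g lam a ((t:ℂ)*z)) t := by
    intro t ht
    rw [Set.uIcc_of_le zero_le_one] at ht
    have htz : ‖(t:ℂ)*z‖ < 1 := by
      rw [norm_mul, Complex.norm_real]
      calc |t| * ‖z‖ ≤ 1 * ‖z‖ := by
            gcongr; rw [abs_le]; exact ⟨by linarith [ht.1], ht.2⟩
        _ < 1 := by simpa using hz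
    have h2 : HasDerivAt (fun w : ℂ => w*z) z ((t:ℂ)) := by
      simpa using (hasDerivAt_id ((t:ℂ))).mul_const z
    have h1 : HasDerivAt (fun w : ℂ => g lam a (w*z)) (gz' lam a ((t:ℂ)*z)*z) ((t:ℂ)) :=
      by have := (hasDerivAt_g_z hlam ha htz).comp ((t:ℂ)) h2; exact this
    have hc := (hasDerivAt_id ((t:ℂ))).fun_mul h1
    have hr := hc.comp_ofReal
    refine hr.congr_deriv ?_
    simp only [id_eq]
    ring
  apply (intervalIntegral.integral_eq_sub_of_hasDerivAt key ?_).trans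
  · push_cast
    simp
  · apply ContinuousOn.intervalIntegrable
    rw [Set.uIcc_of_le zero_le_one]
    have c1 : ContinuousOn (fun t : ℝ => gz' lam a ((t:ℂ)*z)) (Set.Icc 0 1) := by
      apply cont_comp
      exact cont_gz' hlam ha hz
    have c2 : ContinuousOn (fun t : ℝ => g lam a ((t:ℂ)*z)) (Set.Icc 0 1) := by
      apply cont_comp
      exact cont_g hlam ha hz
    exact ((c1.mul (Complex.continuous_ofReal.continuousOn)).mul continuousOn_const).add c2

set_option maxHeartbeats 2000000 in
lemma hasDerivAt_int_z (hlam : ‖lam‖ < 1) (ha : ‖a‖ ≤ 1) {z₁ : ℂ} (hz₁ : ‖z₁‖ < 1) :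
    HasDerivAt (fun z => ∫ t in (0:ℝ)..1, g lam a ((t:ℂ)*z)*z) (g lam a z₁) z₁ := by
  set s : ℝ := (1+‖z₁‖)/2 with hs_def
  have hs : s < 1 := by rw [hs_def]; linarith
  have hs0 : (0:ℝ) ≤ s := by rw [hs_def]; positivity
  have hz₁s : ‖z₁‖ < s := by rw [hs_def]; linarith
  have hε : (0:ℝ) < s - ‖z₁‖ := by linarith
  obtain ⟨C₁, hC₁0, hC₁⟩ := compact_bound hs0 (cont_gz' hlam ha hs)
  obtain ⟨C₂, hC₂0, hC₂⟩ := compact_bound hs0 (cont_g (lam := lam) hlam ha hs)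
  have hzs : ∀ z ∈ ball z₁ (s - ‖z₁‖), ‖z‖ ≤ s := by
    intro z hz
    rw [mem_ball, dist_eq_norm] at hz
    calc ‖z‖ = ‖z - z₁ + z₁‖ := by ring_nf
      _ ≤ ‖z - z₁‖ + ‖z₁‖ := norm_add_le _ _
      _ ≤ s := by linarith
  have htz : ∀ (t : ℝ), t ∈ Set.uIoc (0:ℝ) 1 → ∀ (z : ℂ), ‖z‖ ≤ s → ‖(t:ℂ)*z‖ ≤ s := by
    intro t ht z hz
    rw [Set.uIoc_of_le zero_le_one] at ht
    rw [norm_mul, Complex.norm_real]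
    calc |t| * ‖z‖ ≤ 1 * s := by
          apply mul_le_mul _ hz (norm_nonneg z) zero_le_one
          rw [abs_le]; exact ⟨by linarith [ht.1.le], ht.2⟩
      _ = s := one_mul _
  have hmeas : ∀ᶠ zz in nhds z₁, AEStronglyMeasurable
      (fun t : ℝ => g lam a ((t:ℂ)*zz)*zz) (volume.restrict (Set.uIoc (0:ℝ) 1)) := by
    have hb : ball z₁ (s - ‖z₁‖) ∈ nhds z₁ := ball_mem_nhds z₁ hε
    refine Filter.eventually_iff_exists_mem.mpr ⟨_, hb, fun zz hz => ?_⟩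
    have hzlt : ‖zz‖ < 1 := lt_of_le_of_lt (hzs zz hz) hs
    exact aesm_of_contIcc ((cont_comp (cont_g hlam ha hzlt)).mul continuousOn_const)
  have hint : IntervalIntegrable (fun t : ℝ => g lam a ((t:ℂ)*z₁)*z₁) volume 0 1 := by
    apply ContinuousOn.intervalIntegrable
    rw [Set.uIcc_of_le zero_le_one]
    exact (cont_comp (cont_g hlam ha hz₁)).mul continuousOn_const
  have hmeas' : AEStronglyMeasurable
      (fun t : ℝ => (gz' lam a ((t:ℂ)*z₁)*(t:ℂ))*z₁ + g lam a ((t:ℂ)*z₁))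
      (volume.restrict (Set.uIoc (0:ℝ) 1)) := by
    apply aesm_of_contIcc
    exact (((cont_comp (cont_gz' hlam ha hz₁)).mul
      Complex.continuous_ofReal.continuousOn).mul continuousOn_const).add
      (cont_comp (cont_g hlam ha hz₁))
  have hbound : ∀ᵐ t ∂volume, t ∈ Set.uIoc (0:ℝ) 1 → ∀ zz ∈ ball z₁ (s - ‖z₁‖),
      ‖(gz' lam a ((t:ℂ)*zz)*(t:ℂ))*zz + g lam a ((t:ℂ)*zz)‖ ≤ C₁ + C₂ := by
    apply Filter.Eventually.of_forall
    intro t ht zz hzz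
    have h1 : ‖(t:ℂ)*zz‖ ≤ s := htz t ht zz (hzs zz hzz)
    have h2 : |t| ≤ 1 := by
      rw [Set.uIoc_of_le zero_le_one] at ht
      rw [abs_le]; exact ⟨by linarith [ht.1.le], ht.2⟩
    calc ‖(gz' lam a ((t:ℂ)*zz)*(t:ℂ))*zz + g lam a ((t:ℂ)*zz)‖
        ≤ ‖(gz' lam a ((t:ℂ)*zz)*(t:ℂ))*zz‖ + ‖g lam a ((t:ℂ)*zz)‖ := norm_add_le _ _
      _ ≤ C₁*1*1 + C₂ := by
          have hstep : ‖(gz' lam a ((t:ℂ)*zz)*(t:ℂ))*zz‖ ≤ C₁*1*1 := by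
            rw [norm_mul, norm_mul, Complex.norm_real]
            apply mul_le_mul (mul_le_mul (hC₁ _ h1) h2 (abs_nonneg t) hC₁0)
              (le_trans (hzs zz hzz) hs.le) (norm_nonneg zz) (by nlinarith)
          exact add_le_add hstep (hC₂ _ h1)
      _ = C₁ + C₂ := by ring
  have hbint : IntervalIntegrable (fun _ : ℝ => C₁ + C₂) volume 0 1 := intervalIntegrable_const
  have hdiff : ∀ᵐ t ∂volume, t ∈ Set.uIoc (0:ℝ) 1 → ∀ zz ∈ ball z₁ (s - ‖z₁‖),
      HasDerivAt (fun z : ℂ => g lam a ((t:ℂ)*z)*z)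
        ((gz' lam a ((t:ℂ)*zz)*(t:ℂ))*zz + g lam a ((t:ℂ)*zz)) zz := by
    apply Filter.Eventually.of_forall
    intro t ht zz hzz
    have h1 : ‖(t:ℂ)*zz‖ < 1 := lt_of_le_of_lt (htz t ht zz (hzs zz hzz)) hs
    have h2 : HasDerivAt (fun z : ℂ => (t:ℂ)*z) ((t:ℂ)) zz := by
      simpa using (hasDerivAt_id zz).const_mul ((t:ℂ))
    have h3 : HasDerivAt (fun z : ℂ => g lam a ((t:ℂ)*z)) (gz' lam a ((t:ℂ)*zz)*(t:ℂ)) zz :=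
      (hasDerivAt_g_z hlam ha h1).comp zz h2
    simpa using h3.fun_mul (hasDerivAt_id' zz)
  have main := (intervalIntegral.hasDerivAt_integral_of_dominated_loc_of_deriv_le (ball_mem_nhds z₁ hε)
    hmeas hint hmeas' hbound hbint hdiff).2
  rwa [integral_Fz hlam ha hz₁] at main


lemma Hlog_eq (μ lam a z : ℂ) :
    Hlog μ lam a z = μ/(Real.pi:ℂ) * ∫ t in (0:ℝ)..1, g lam a ((t:ℂ)*z)*z := rfl

lemma Hlog_zero (μ lam a : ℂ) : Hlog μ lam a 0 = 0 := by
  simp [Hlog]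

lemma g_zero (lam a : ℂ) : g lam a 0 = lam - 1 := by
  simp [g, dl]

lemma Hfun_zero (μ lam a : ℂ) : Hfun μ lam a 0 = 1 := by
  show Complex.exp (Hlog μ lam a 0) = 1
  rw [Hlog_zero]
  exact Complex.exp_zero

lemma re_mobius_pos {w : ℂ} (hw : ‖w‖ < 1) : 0 < ((1+w)/(1-w)).re := by
  have h1 : (1:ℂ) - w ≠ 0 := one_sub_ne hw
  rw [Complex.div_re, ← add_div]
  apply div_pos
  · have h2 := normSq_lt_one hw
    rw [Complex.normSq_apply] at h2
    simp only [Complex.add_re, Complex.add_im, Complex.sub_re, Complex.sub_im,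
      Complex.one_re, Complex.one_im]
    nlinarith
  · exact Complex.normSq_pos.mpr h1

lemma hasDerivAt_Hlog_z {μ : ℂ} (hlam : ‖lam‖ < 1) (ha : ‖a‖ ≤ 1) {z₁ : ℂ}
    (hz₁ : ‖z₁‖ < 1) :
    HasDerivAt (fun z => Hlog μ lam a z) (μ/(Real.pi:ℂ) * g lam a z₁) z₁ :=
  (hasDerivAt_int_z hlam ha hz₁).const_mul (μ/(Real.pi:ℂ))

lemma hasDerivAt_Hfun {μ : ℂ} (hlam : ‖lam‖ < 1) (ha : ‖a‖ ≤ 1) {z₁ : ℂ}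
    (hz₁ : ‖z₁‖ < 1) :
    HasDerivAt (fun z => Hfun μ lam a z)
      (Hfun μ lam a z₁ * (μ/(Real.pi:ℂ) * g lam a z₁)) z₁ :=
  (hasDerivAt_Hlog_z hlam ha hz₁).cexp

lemma Pfun_pos {μ : ℂ} (hμ : 0 < μ.re) (hlam : ‖lam‖ < 1) (ha : ‖a‖ ≤ 1)
    (hz : ‖z‖ < 1) : 0 < (Pfun μ (fun z => Hfun μ lam a z) z).re := by
  have hμ0 : μ ≠ 0 := fun h => by simp [h] at hμ
  have hπ : ((Real.pi : ℝ) : ℂ) ≠ 0 := by simpa using Real.pi_ne_zero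
  have hd := (hasDerivAt_Hfun (μ := μ) hlam ha hz).deriv
  have hfz : Hfun μ lam a z ≠ 0 := Complex.exp_ne_zero _
  have hw : ‖dl lam (a*z)*z‖ < 1 := by
    rw [norm_mul]
    calc ‖dl lam (a*z)‖*‖z‖ ≤ 1*‖z‖ := by
          gcongr
          exact (dl_lt_one hlam (norm_aζ ha hz)).le
      _ < 1 := by simpa using hz
  have key : Pfun μ (fun z => Hfun μ lam a z) z
      = (1 + dl lam (a*z)*z)/(1 - dl lam (a*z)*z) := by
    rw [Pfun, hd]
    have e1 : z * (Hfun μ lam a z * (μ / (Real.pi:ℂ) * g lam a z)) / Hfun μ lam a z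
        = z * (μ / (Real.pi:ℂ) * g lam a z) := by
      rw [mul_div_assoc, mul_div_cancel_left₀ _ hfz]
    rw [e1]
    have e2 : 2 * (Real.pi:ℂ) / μ * (z * (μ / (Real.pi:ℂ) * g lam a z)) = 2 * z * g lam a z := by
      field_simp
    rw [e2]
    simp only [g]
    have h2 := uζ_ne hlam ha hz
    have h3 : (1:ℂ) - z ≠ 0 := one_sub_ne hz
    generalize dl lam (a*z) = D at h2 ⊢
    have h2' : 1 - z * D ≠ 0 := by rwa [mul_comm]
    field_simp
    ring
  rw [key]
  exact re_mobius_pos hw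

lemma deriv_Hfun_zero {μ : ℂ} (hlam : ‖lam‖ < 1) (ha : ‖a‖ ≤ 1) :
    deriv (fun z => Hfun μ lam a z) 0 = μ/(Real.pi:ℂ) * (lam - 1) := by
  have hd := (hasDerivAt_Hfun (μ := μ) hlam ha (z₁ := 0) (by simp)).deriv
  rw [hd, Hfun_zero, g_zero]
  simp

lemma logf_H {μ : ℂ} (hlam : ‖lam‖ < 1) (ha : ‖a‖ ≤ 1) (hz₀ : ‖z₀‖ < 1) :
    logf (fun z => Hfun μ lam a z) z₀ = Hlog μ lam a z₀ := by
  rw [Hlog_eq, ← intervalIntegral.integral_const_mul]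
  simp only [logf]
  apply intervalIntegral.integral_congr
  intro t ht
  rw [Set.uIcc_of_le zero_le_one] at ht
  have htz : ‖(t:ℂ)*z₀‖ < 1 := by
    rw [norm_mul, Complex.norm_real]
    calc |t| * ‖z₀‖ ≤ 1 * ‖z₀‖ := by
          gcongr; rw [abs_le]; exact ⟨by linarith [ht.1], ht.2⟩
      _ < 1 := by simpa using hz₀
  have hd := (hasDerivAt_Hfun (μ := μ) hlam ha htz).deriv
  simp only [hd]
  have hfz : Hfun μ lam a ((t:ℂ)*z₀) ≠ 0 := Complex.exp_ne_zero _
  rw [mul_div_cancel_left₀ _ hfz]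
  ring

lemma memFlam_H {μ : ℂ} (hμ : 0 < μ.re) (hlam : ‖lam‖ < 1) (ha : ‖a‖ < 1) :
    memFlam μ lam (fun z => Hfun μ lam a z) := by
  refine ⟨⟨?_, ?_, ?_, ?_⟩, ?_⟩
  · apply DifferentiableOn.analyticOnNhd (s := unitDisk) ?_ Metric.isOpen_ball
    intro z hz
    exact (hasDerivAt_Hfun hlam ha.le
      (by simpa [unitDisk, mem_ball_zero_iff] using hz)).differentiableAt.differentiableWithinAt
  · intro z _
    exact Complex.exp_ne_zero _
  · exact Hfun_zero μ lam a
  · intro z hz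
    exact Pfun_pos hμ hlam ha.le (by simpa [unitDisk, mem_ball_zero_iff] using hz)
  · exact deriv_Hfun_zero hlam ha.le

end S17

end

theorem stmt17 (μ lam z₀ : ℂ) (hμ : 0 < μ.re) (hlam : ‖lam‖ < 1)
    (hz₀ : z₀ ∈ unitDisk) (hz₀0 : z₀ ≠ 0) :
    AnalyticOnNhd ℂ (fun a => Hlog μ lam a z₀) unitDisk ∧
    (¬ ∃ c : ℂ, ∀ a ∈ unitDisk, Hlog μ lam a z₀ = c) ∧
    (∀ U : Set ℂ, U ⊆ unitDisk → IsOpen U → IsOpen ((fun a => Hlog μ lam a z₀) '' U)) ∧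
    IsOpen ((fun a => Hlog μ lam a z₀) '' unitDisk) ∧
    (fun a => Hlog μ lam a z₀) '' unitDisk ⊆ Vset μ lam z₀ := by
  have hlam' : ‖lam‖ < 1 := hlam
  have hz₀' : ‖z₀‖ < 1 := by simpa [unitDisk, mem_ball_zero_iff] using hz₀
  have hμ0 : μ ≠ 0 := fun h => by simp [h] at hμ
  have hπ : ((Real.pi : ℝ) : ℂ) ≠ 0 := by simpa using Real.pi_ne_zero
  have hda : ∀ a₀ ∈ unitDisk, HasDerivAt (fun a => Hlog μ lam a z₀)
      (μ/(Real.pi:ℂ) * ∫ t in (0:ℝ)..1, S17.ga' lam a₀ ((t:ℂ)*z₀)*z₀) a₀ := by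
    intro a₀ ha₀
    have ha₀' : ‖a₀‖ < 1 := by simpa [unitDisk, mem_ball_zero_iff] using ha₀
    exact (S17.hasDerivAt_int_a hlam' hz₀' ha₀').const_mul (μ/(Real.pi:ℂ))
  have hAna : AnalyticOnNhd ℂ (fun a => Hlog μ lam a z₀) unitDisk := by
    apply DifferentiableOn.analyticOnNhd (s := unitDisk) ?_ Metric.isOpen_ball
    intro a ha
    exact ((hda a ha).differentiableAt).differentiableWithinAt
  have hNC : ¬ ∃ c : ℂ, ∀ a ∈ unitDisk, Hlog μ lam a z₀ = c := by
    rintro ⟨c, hc⟩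
    have h0 : (0:ℂ) ∈ unitDisk := by simp [unitDisk, mem_ball_zero_iff]
    have hev : (fun _ : ℂ => c) =ᶠ[nhds (0:ℂ)] (fun a => Hlog μ lam a z₀) := by
      have hmem : unitDisk ∈ nhds (0:ℂ) := Metric.isOpen_ball.mem_nhds h0
      exact Filter.eventually_iff_exists_mem.mpr ⟨_, hmem, fun a ha => (hc a ha).symm⟩
    have h1 := (hda 0 h0).congr_of_eventuallyEq hev
    have h2 : (μ/(Real.pi:ℂ) * ∫ t in (0:ℝ)..1, S17.ga' lam 0 ((t:ℂ)*z₀)*z₀) = 0 :=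
      h1.unique (hasDerivAt_const _ _)
    exact (mul_ne_zero (div_ne_zero hμ0 hπ) (S17.deriv0_ne hlam' hz₀' hz₀0)) h2
  have hOpen : ∀ U : Set ℂ, U ⊆ unitDisk → IsOpen U →
      IsOpen ((fun a => Hlog μ lam a z₀) '' U) := by
    rcases hAna.is_constant_or_isOpen ((convex_ball (0:ℂ) 1).isPreconnected) with h | h
    · exact absurd ⟨h.choose, h.choose_spec⟩ hNC
    · exact fun U hU hUo => h U hU hUo
  refine ⟨hAna, hNC, hOpen, hOpen unitDisk le_rfl Metric.isOpen_ball, ?_⟩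
  rintro w ⟨a, ha, rfl⟩
  have ha' : ‖a‖ < 1 := by simpa [unitDisk, mem_ball_zero_iff] using ha
  exact ⟨fun z => Hfun μ lam a z, S17.memFlam_H hμ hlam' ha',
    (S17.logf_H hlam' ha'.le hz₀').symm⟩
end

section
/- Let μ ∈ ℂ with Re μ > 0, |λ| < 1, θ ∈ ℝ, and z ∈ D. Then H_{e^{iθ},λ}'(z)/H_{e^{iθ},λ}(z) − (μ/π)·c(z,λ) = (|μ|/π)·r(z,λ)·G'(z)/|G'(z)| for z ≠ 0, where G(z) = (μ/π)·∫₀^z e^{iθ}ζ / (1 + (conj(λ)e^{iθ} − λ)ζ − e^{iθ}ζ²)² dζ, c(z,λ) = (|z|²(conj(z) − λ)(1 − conj(λ)) − (1 − λ)(1 − conj(λ)·conj(z))) / ((1 − z)(1 − |z|²)(1 + |z|² − 2·Re(λz))), and r(z,λ) = (1 − |λ|²)|z| / ((1 − |z|²)(1 + |z|² − 2·Re(λz))). -/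
open Complex Set Metric

set_option maxHeartbeats 1000000 in
lemma hasDerivAt_segInt {f : ℂ → ℂ} (hf : AnalyticOnNhd ℂ f unitDisk) {z : ℂ}
    (hz : z ∈ unitDisk) :
    HasDerivAt (fun w => ∫ t in (0:ℝ)..1, f (t * w) * w) (f z) z := by
  have hop : IsOpen unitDisk := isOpen_ball
  have hdiff : ∀ w ∈ unitDisk, DifferentiableAt ℂ f w := fun w hw => (hf w hw).differentiableAt
  have hderiv : AnalyticOnNhd ℂ (deriv f) unitDisk := hf.deriv
  have habs : ‖z‖ < 1 := by simpa [unitDisk] using hz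
  set ρ : ℝ := (1 + ‖z‖) / 2 with hρdef
  have hρ1 : ρ < 1 := by simp only [hρdef]; linarith
  have hzρ : ‖z‖ < ρ := by simp only [hρdef]; linarith
  have hρ0 : 0 ≤ ρ := by positivity
  set ε : ℝ := (1 - ‖z‖) / 2 with hεdef
  have hε : 0 < ε := by simp only [hεdef]; linarith
  -- membership fact
  have hmem : ∀ t : ℝ, t ∈ Set.Icc (0:ℝ) 1 → ∀ x ∈ ball z ε, (t : ℂ) * x ∈ closedBall (0:ℂ) ρ := by
    intro t ht x hx
    have hxa : ‖x‖ < ρ := by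
      have := mem_ball_iff_norm.mp hx
      have : ‖x - z‖ < ε := this
      calc ‖x‖ ≤ ‖x - z‖ + ‖z‖ := by
              simpa using norm_add_le (x - z) z
        _ < ε + ‖z‖ := by linarith
        _ = ρ := by simp only [hεdef, hρdef]; ring
    simp only [mem_closedBall, dist_zero_right, norm_mul,
      Complex.norm_real, Real.norm_eq_abs]
    calc |t| * ‖x‖ ≤ 1 * ρ := by
          apply mul_le_mul _ hxa.le (norm_nonneg x) zero_le_one
          rw [_root_.abs_of_nonneg ht.1]; exact ht.2
      _ = ρ := one_mul ρ
  have hKsub : closedBall (0:ℂ) ρ ⊆ unitDisk := by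
    intro w hw
    simp only [mem_closedBall, dist_zero_right] at hw
    exact mem_ball_zero_iff.mpr (lt_of_le_of_lt hw hρ1)
  have hK : IsCompact (closedBall (0:ℂ) ρ) := isCompact_closedBall _ _
  have hfc : ContinuousOn f (closedBall (0:ℂ) ρ) :=
    (hf.continuousOn).mono hKsub
  have hfc' : ContinuousOn (deriv f) (closedBall (0:ℂ) ρ) :=
    (hderiv.continuousOn).mono hKsub
  obtain ⟨M1, hM1⟩ := hK.exists_bound_of_continuousOn hfc
  obtain ⟨M2, hM2⟩ := hK.exists_bound_of_continuousOn hfc'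
  have hM1_0 : 0 ≤ M1 := le_trans (norm_nonneg _) (hM1 0 (mem_closedBall_self hρ0))
  have hM2_0 : 0 ≤ M2 := le_trans (norm_nonneg _) (hM2 0 (mem_closedBall_self hρ0))
  have hcont : ∀ x ∈ ball z ε, ContinuousOn (fun t : ℝ => f ((t:ℂ) * x) * x) (Set.Icc (0:ℝ) 1) := by
    intro x hx
    apply ContinuousOn.mul _ continuousOn_const
    apply hfc.comp ((Complex.continuous_ofReal.mul continuous_const).continuousOn)
    intro t ht
    exact hmem t ht x hx
  have hcont' : ContinuousOn
      (fun t : ℝ => deriv f ((t:ℂ) * z) * (t:ℂ) * z + f ((t:ℂ) * z)) (Set.Icc (0:ℝ) 1) := by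
    have hmap : Set.MapsTo (fun t : ℝ => (t:ℂ) * z) (Set.Icc (0:ℝ) 1) (closedBall (0:ℂ) ρ) :=
      fun t ht => hmem t ht z (mem_ball_self hε)
    have h1 : ContinuousOn (fun t : ℝ => (t:ℂ) * z) (Set.Icc (0:ℝ) 1) :=
      (Complex.continuous_ofReal.mul continuous_const).continuousOn
    have h2 : ContinuousOn (fun t : ℝ => deriv f ((t:ℂ) * z)) (Set.Icc (0:ℝ) 1) :=
      hfc'.comp h1 hmap
    have h3 : ContinuousOn (fun t : ℝ => f ((t:ℂ) * z)) (Set.Icc (0:ℝ) 1) :=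
      hfc.comp h1 hmap
    have h4 : ContinuousOn (fun t : ℝ => (t:ℂ)) (Set.Icc (0:ℝ) 1) :=
      Complex.continuous_ofReal.continuousOn
    exact ((h2.mul h4).mul continuousOn_const).add h3
  have hdiffx : ∀ t ∈ Set.Icc (0:ℝ) 1, ∀ x ∈ ball z ε,
      HasDerivAt (fun x => f ((t:ℂ) * x) * x)
        (deriv f ((t:ℂ) * x) * (t:ℂ) * x + f ((t:ℂ) * x)) x := by
    intro t ht x hx
    have hmem' : (t:ℂ) * x ∈ unitDisk := hKsub (hmem t ht x hx)
    have hd : HasDerivAt f (deriv f ((t:ℂ) * x)) ((t:ℂ) * x) :=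
      (hdiff _ hmem').hasDerivAt
    have hin : HasDerivAt (fun x : ℂ => (t:ℂ) * x) (t:ℂ) x := by
      simpa using (hasDerivAt_id x).const_mul (t:ℂ)
    have h1 : HasDerivAt (fun x : ℂ => f ((t:ℂ) * x)) (deriv f ((t:ℂ) * x) * (t:ℂ)) x :=
      hd.comp x hin
    refine (h1.mul (hasDerivAt_id x)).congr_deriv ?_
    simp only [id_eq, mul_one]
  have hsub : Set.uIoc (0:ℝ) 1 ⊆ Set.Icc (0:ℝ) 1 := by
    rw [Set.uIoc_of_le zero_le_one]; exact Set.Ioc_subset_Icc_self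
  have hmeas : ∀ᶠ x in nhds z, MeasureTheory.AEStronglyMeasurable
      (fun t : ℝ => f ((t:ℂ) * x) * x) (MeasureTheory.volume.restrict (Set.uIoc (0:ℝ) 1)) := by
    filter_upwards [ball_mem_nhds z hε] with x hx
    exact ((hcont x hx).mono hsub).aestronglyMeasurable measurableSet_uIoc
  have hint : IntervalIntegrable (fun t : ℝ => f ((t:ℂ) * z) * z) MeasureTheory.volume 0 1 :=
    ((hcont z (mem_ball_self hε)).mono (by rw [Set.uIcc_of_le zero_le_one])).intervalIntegrable
  have h'meas : MeasureTheory.AEStronglyMeasurable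
      (fun t : ℝ => deriv f ((t:ℂ) * z) * (t:ℂ) * z + f ((t:ℂ) * z))
      (MeasureTheory.volume.restrict (Set.uIoc (0:ℝ) 1)) :=
    (hcont'.mono hsub).aestronglyMeasurable measurableSet_uIoc
  have hbound : ∀ᵐ t ∂(MeasureTheory.volume : MeasureTheory.Measure ℝ), t ∈ Set.uIoc (0:ℝ) 1 →
      ∀ x ∈ ball z ε, ‖deriv f ((t:ℂ) * x) * (t:ℂ) * x + f ((t:ℂ) * x)‖ ≤ M2 * ρ + M1 := by
    apply MeasureTheory.ae_of_all
    intro t ht x hx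
    have ht' : t ∈ Set.Icc (0:ℝ) 1 := hsub ht
    have hm := hmem t ht' x hx
    have hm2 : ‖deriv f ((t:ℂ) * x)‖ ≤ M2 := hM2 _ hm
    have hm1 : ‖f ((t:ℂ) * x)‖ ≤ M1 := hM1 _ hm
    have htx : ‖(t:ℂ) * x‖ ≤ ρ := by simpa [dist_zero_right] using hm
    calc ‖deriv f ((t:ℂ) * x) * (t:ℂ) * x + f ((t:ℂ) * x)‖
        ≤ ‖deriv f ((t:ℂ) * x) * (t:ℂ) * x‖ + ‖f ((t:ℂ) * x)‖ := norm_add_le _ _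
      _ ≤ M2 * ρ + M1 := by
          apply add_le_add _ hm1
          rw [mul_assoc, norm_mul]
          exact mul_le_mul hm2 htx (norm_nonneg _) hM2_0
  have hbddint : IntervalIntegrable (fun _ : ℝ => M2 * ρ + M1) MeasureTheory.volume 0 1 :=
    intervalIntegrable_const
  have hdiff2 : ∀ᵐ t ∂(MeasureTheory.volume : MeasureTheory.Measure ℝ), t ∈ Set.uIoc (0:ℝ) 1 →
      ∀ x ∈ ball z ε, HasDerivAt (fun x => f ((t:ℂ) * x) * x)
        (deriv f ((t:ℂ) * x) * (t:ℂ) * x + f ((t:ℂ) * x)) x :=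
    MeasureTheory.ae_of_all _ (fun t ht x hx => hdiffx t (hsub ht) x hx)
  have main := (intervalIntegral.hasDerivAt_integral_of_dominated_loc_of_deriv_le (ball_mem_nhds z hε) hmeas hint
    h'meas hbound hbddint hdiff2).2
  have hIcc : Set.uIcc (0:ℝ) 1 = Set.Icc (0:ℝ) 1 := Set.uIcc_of_le zero_le_one
  have hint' : IntervalIntegrable
      (fun t : ℝ => deriv f ((t:ℂ) * z) * (t:ℂ) * z + f ((t:ℂ) * z)) MeasureTheory.volume 0 1 :=
    (hcont'.mono (by rw [hIcc])).intervalIntegrable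
  have key : ∀ t ∈ Set.uIcc (0:ℝ) 1, HasDerivAt (fun s : ℝ => (s:ℂ) * f ((s:ℂ) * z))
      (deriv f ((t:ℂ) * z) * (t:ℂ) * z + f ((t:ℂ) * z)) t := by
    intro t ht
    rw [hIcc] at ht
    have hmem' : (t:ℂ) * z ∈ unitDisk := hKsub (hmem t ht z (mem_ball_self hε))
    have hd : HasDerivAt f (deriv f ((t:ℂ) * z)) ((t:ℂ) * z) := (hdiff _ hmem').hasDerivAt
    have hin : HasDerivAt (fun x : ℂ => x * z) z (t:ℂ) := by
      simpa using (hasDerivAt_id ((t:ℂ))).mul_const z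
    have h2 : HasDerivAt (fun x : ℂ => f (x * z)) (deriv f ((t:ℂ) * z) * z) (t:ℂ) :=
      hd.comp (t:ℂ) hin
    have he : HasDerivAt (fun x : ℂ => x * f (x * z))
        (1 * f ((t:ℂ) * z) + (t:ℂ) * (deriv f ((t:ℂ) * z) * z)) (t:ℂ) :=
      (hasDerivAt_id _).mul h2
    have := he.comp_ofReal
    convert this using 1
    ring
  have hval : (∫ t in (0:ℝ)..1, (deriv f ((t:ℂ) * z) * (t:ℂ) * z + f ((t:ℂ) * z))) = f z := by
    rw [intervalIntegral.integral_eq_sub_of_hasDerivAt key hint']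
    norm_num
  rw [hval] at main
  exact main


lemma mem_unitDisk {z : ℂ} : z ∈ unitDisk ↔ ‖z‖ < 1 := by
  simp [unitDisk, mem_ball_zero_iff]

lemma onePlus_ne {w : ℂ} (hw : ‖w‖ < 1) : (1 : ℂ) + w ≠ 0 := by
  intro h
  have : w = -1 := by linear_combination h
  rw [this] at hw; simp at hw

lemma mobius_lt {w l : ℂ} (hw : ‖w‖ < 1) (hl : ‖l‖ < 1) :
    ‖w + l‖ < ‖1 + (starRingEnd ℂ) l * w‖ := by
  have key : Complex.normSq (1 + (starRingEnd ℂ) l * w) - Complex.normSq (w + l)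
      = (1 - Complex.normSq w) * (1 - Complex.normSq l) := by
    simp only [Complex.normSq_apply, Complex.add_re, Complex.add_im, Complex.mul_re,
      Complex.mul_im, Complex.one_re, Complex.one_im, Complex.conj_re, Complex.conj_im]
    ring
  have hw2 : Complex.normSq w < 1 := by
    rw [← Complex.sq_norm]; nlinarith [norm_nonneg w]
  have hl2 : Complex.normSq l < 1 := by
    rw [← Complex.sq_norm]; nlinarith [norm_nonneg l]
  have hlt : Complex.normSq (w + l) < Complex.normSq (1 + (starRingEnd ℂ) l * w) := by nlinarith
  rw [Complex.norm_def, Complex.norm_def]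
  exact Real.sqrt_lt_sqrt (Complex.normSq_nonneg _) hlt

lemma Q_ne {lam a ζ : ℂ} (hlam : ‖lam‖ < 1) (ha : ‖a‖ = 1)
    (hζ : ‖ζ‖ < 1) :
    1 + ((starRingEnd ℂ) lam * a - lam) * ζ - a * ζ ^ 2 ≠ 0 := by
  intro h
  have haζ : ‖a * ζ‖ < 1 := by rw [norm_mul, ha, one_mul]; exact hζ
  have h1 : (1 : ℂ) + (starRingEnd ℂ) lam * (a * ζ) ≠ 0 := by
    apply onePlus_ne
    calc ‖(starRingEnd ℂ) lam * (a * ζ)‖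
        = ‖lam‖ * ‖a * ζ‖ := by rw [norm_mul, Complex.norm_conj]
      _ < 1 := by nlinarith [norm_nonneg lam, norm_nonneg (a*ζ)]
  have heq : ζ * (a * ζ + lam) = 1 + (starRingEnd ℂ) lam * (a * ζ) := by linear_combination -h
  have habs : ‖ζ‖ * ‖a * ζ + lam‖
      = ‖1 + (starRingEnd ℂ) lam * (a * ζ)‖ := by
    rw [← norm_mul, heq]
  have hlt := mobius_lt haζ hlam
  have hpos : 0 < ‖1 + (starRingEnd ℂ) lam * (a * ζ)‖ :=
    (norm_pos_iff.mpr h1)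
  nlinarith [norm_nonneg (a * ζ + lam), norm_nonneg ζ]


lemma one_plus_maζ_ne {lam a ζ : ℂ} (hlam : ‖lam‖ < 1) (ha : ‖a‖ = 1)
    (hζ : ‖ζ‖ < 1) : (1 : ℂ) + (starRingEnd ℂ) lam * (a * ζ) ≠ 0 := by
  apply onePlus_ne
  rw [norm_mul, norm_mul, Complex.norm_conj, ha, one_mul]
  nlinarith [norm_nonneg lam, norm_nonneg ζ]

lemma one_sub_ne_s19 {ζ : ℂ} (hζ : ‖ζ‖ < 1) : (1 : ℂ) - ζ ≠ 0 := by
  have := onePlus_ne (w := -ζ) (by simpa using hζ)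
  simpa [sub_eq_add_neg] using this

lemma one_sub_dl_ne {lam a ζ : ℂ} (hlam : ‖lam‖ < 1) (ha : ‖a‖ = 1)
    (hζ : ‖ζ‖ < 1) : 1 - dl lam (a * ζ) * ζ ≠ 0 := by
  have h1 := one_plus_maζ_ne hlam ha hζ
  have hQ := Q_ne hlam ha hζ
  have key : (1 - dl lam (a * ζ) * ζ) * (1 + (starRingEnd ℂ) lam * (a * ζ))
      = 1 + ((starRingEnd ℂ) lam * a - lam) * ζ - a * ζ ^ 2 := by
    unfold dl; rw [sub_mul, div_mul_eq_mul_div, div_mul_cancel₀ _ h1]; ring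
  intro h
  rw [h, zero_mul] at key
  exact hQ key.symm

lemma gH_analytic {lam a : ℂ} (hlam : ‖lam‖ < 1) (ha : ‖a‖ = 1) :
    AnalyticOnNhd ℂ
      (fun ζ => (dl lam (a * ζ) - 1) / ((1 - dl lam (a * ζ) * ζ) * (1 - ζ))) unitDisk := by
  have hid : AnalyticOnNhd ℂ (fun ζ : ℂ => ζ) unitDisk := analyticOnNhd_id
  have hdl : AnalyticOnNhd ℂ (fun ζ => dl lam (a * ζ)) unitDisk := by
    unfold dl
    apply AnalyticOnNhd.div
    · exact ((analyticOnNhd_const.mul hid).add analyticOnNhd_const)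
    · exact analyticOnNhd_const.add (analyticOnNhd_const.mul (analyticOnNhd_const.mul hid))
    · intro ζ hζ; exact one_plus_maζ_ne hlam ha (mem_unitDisk.mp hζ)
  apply AnalyticOnNhd.div
  · exact hdl.sub analyticOnNhd_const
  · exact ((analyticOnNhd_const.sub (hdl.mul hid)).mul (analyticOnNhd_const.sub hid))
  · intro ζ hζ
    exact mul_ne_zero (one_sub_dl_ne hlam ha (mem_unitDisk.mp hζ))
      (one_sub_ne_s19 (mem_unitDisk.mp hζ))

lemma gG_analytic {lam a : ℂ} (hlam : ‖lam‖ < 1) (ha : ‖a‖ = 1) :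
    AnalyticOnNhd ℂ
      (fun ζ => a * ζ / (1 + ((starRingEnd ℂ) lam * a - lam) * ζ - a * ζ ^ 2) ^ 2)
      unitDisk := by
  have hid : AnalyticOnNhd ℂ (fun ζ : ℂ => ζ) unitDisk := analyticOnNhd_id
  apply AnalyticOnNhd.div
  · exact analyticOnNhd_const.mul hid
  · exact (((analyticOnNhd_const.add (analyticOnNhd_const.mul hid)).sub
      (analyticOnNhd_const.mul (hid.pow 2))).pow 2)
  · intro ζ hζ
    exact pow_ne_zero 2 (Q_ne hlam ha (mem_unitDisk.mp hζ))

lemma gH_eq {lam a ζ : ℂ} (hlam : ‖lam‖ < 1) (ha : ‖a‖ = 1)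
    (hζ : ‖ζ‖ < 1) :
    (dl lam (a * ζ) - 1) / ((1 - dl lam (a * ζ) * ζ) * (1 - ζ))
      = ((1 - (starRingEnd ℂ) lam) * (a * ζ) + (lam - 1)) /
        ((1 + ((starRingEnd ℂ) lam * a - lam) * ζ - a * ζ ^ 2) * (1 - ζ)) := by
  have h1 := one_plus_maζ_ne hlam ha hζ
  have hQ := Q_ne hlam ha hζ
  have h2 := one_sub_dl_ne hlam ha hζ
  have h3 := one_sub_ne_s19 hζ
  unfold dl at h2 ⊢
  have h2' : (1 + (starRingEnd ℂ) lam * (a * ζ)) - (a * ζ + lam) * ζ ≠ 0 := by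
    intro h
    apply h2
    rw [div_mul_eq_mul_div, sub_div' h1]
    rw [div_eq_zero_iff]
    left
    linear_combination h
  have e1 : (a * ζ + lam) / (1 + (starRingEnd ℂ) lam * (a * ζ)) - 1
      = ((1 - (starRingEnd ℂ) lam) * (a * ζ) + (lam - 1)) / (1 + (starRingEnd ℂ) lam * (a * ζ)) := by
    rw [div_sub_one h1]; ring
  have e2 : 1 - (a * ζ + lam) / (1 + (starRingEnd ℂ) lam * (a * ζ)) * ζ
      = (1 + ((starRingEnd ℂ) lam * a - lam) * ζ - a * ζ ^ 2) / (1 + (starRingEnd ℂ) lam * (a * ζ)) := by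
    rw [eq_div_iff h1, sub_mul, div_mul_eq_mul_div, div_mul_cancel₀ _ h1]; ring
  rw [e1, e2, div_mul_eq_mul_div, div_div_div_cancel_right₀ h1]



lemma absSqC (x : ℂ) : ((‖x‖ : ℝ) : ℂ) ^ 2 = x * (starRingEnd ℂ) x := by
  rw [← Complex.ofReal_pow, Complex.sq_norm, Complex.mul_conj]

lemma reC (x : ℂ) : ((x.re : ℝ) : ℂ) = (x + (starRingEnd ℂ) x) / 2 := by
  rw [Complex.add_conj]; push_cast; ring

lemma step1_alg (μ' P u s A Q Qb : ℂ) (hP : P ≠ 0) (hu : u ≠ 0) (hs : s ≠ 0)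
    (hQ : Q ≠ 0) (hQb : Qb ≠ 0) :
    (μ' / P * (A / Q ^ 2)) / (u * s / (P * (Q * Qb))) = μ' * A * Qb / (u * s * Q) := by
  field_simp

lemma step2_alg (u P K s A Q B μ' : ℂ) (hP : P ≠ 0) (hu : u ≠ 0) (hs : s ≠ 0)
    (hQ : Q ≠ 0) (hB : B ≠ 0) :
    u / P * (K * s / B) * (μ' * A / (u * s * Q)) = μ' * (K * A) / (P * (B * Q)) := by
  field_simp

lemma final_alg (μ P z w l m a Q Dh R : ℂ) (hP : P ≠ 0)
    (h1z : 1 - z ≠ 0) (hQ : Q ≠ 0) (h1zz : 1 - z * w ≠ 0) (hD' : Dh ≠ 0)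
    (hQdef : Q = 1 + (m * a - l) * z - a * z ^ 2)
    (hDhdef : Dh = 1 + z * w - 2 * ((l * z + m * w) / 2))
    (hRdef : R = a + (l - m * a) * w - w ^ 2) :
    μ / P * (((1 - m) * (a * z) + (l - 1)) / (Q * (1 - z)))
      - μ / P * ((z * w * (w - l) * (1 - m) - (1 - l) * (1 - m * w)) /
          ((1 - z) * (1 - z * w) * Dh))
      = μ * ((1 - l * m) * (z * R)) / (P * ((1 - z * w) * Dh * Q)) := by
  have ne1 : P * (Q * (1 - z)) ≠ 0 := mul_ne_zero hP (mul_ne_zero hQ h1z)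
  have ne2 : P * ((1 - z) * (1 - z * w) * Dh) ≠ 0 :=
    mul_ne_zero hP (mul_ne_zero (mul_ne_zero h1z h1zz) hD')
  have ne3 : P * ((1 - z * w) * Dh * Q) ≠ 0 :=
    mul_ne_zero hP (mul_ne_zero (mul_ne_zero h1zz hD') hQ)
  rw [div_mul_div_comm, div_mul_div_comm, div_sub_div _ _ ne1 ne2,
    div_eq_div_iff (mul_ne_zero ne1 ne2) ne3]
  rw [hQdef, hDhdef, hRdef]
  ring

lemma main_alg (μ P u s z w l m a : ℂ) (ha : a ≠ 0) (hP : P ≠ 0) (hu : u ≠ 0) (hs : s ≠ 0)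
    (h1z : 1 - z ≠ 0) (hQ : 1 + (m * a - l) * z - a * z ^ 2 ≠ 0)
    (hcQ : 1 + (l * a⁻¹ - m) * w - a⁻¹ * w ^ 2 ≠ 0)
    (h1zz : 1 - z * w ≠ 0) (hD : 1 + z * w - (l * z + m * w) ≠ 0) :
    μ / P * (((1 - m) * (a * z) + (l - 1)) / ((1 + (m * a - l) * z - a * z ^ 2) * (1 - z)))
      - μ / P * ((z * w * (w - l) * (1 - m) - (1 - l) * (1 - m * w)) /
          ((1 - z) * (1 - z * w) * (1 + z * w - 2 * ((l * z + m * w) / 2))))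
      = u / P * ((1 - l * m) * s / ((1 - z * w) * (1 + z * w - 2 * ((l * z + m * w) / 2)))) *
        ((μ / P * (a * z / (1 + (m * a - l) * z - a * z ^ 2) ^ 2)) /
          (u * s / (P * ((1 + (m * a - l) * z - a * z ^ 2) *
            (1 + (l * a⁻¹ - m) * w - a⁻¹ * w ^ 2))))) := by
  have hD' : 1 + z * w - 2 * ((l * z + m * w) / 2) ≠ 0 := by
    rw [show 1 + z * w - 2 * ((l * z + m * w) / 2) = 1 + z * w - (l * z + m * w) by ring]
    exact hD
  rw [step1_alg _ _ _ _ _ _ _ hP hu hs hQ hcQ]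
  rw [show μ * (a * z) * (1 + (l * a⁻¹ - m) * w - a⁻¹ * w ^ 2)
      = μ * (z * (a + (l - m * a) * w - w ^ 2)) by field_simp]
  rw [step2_alg _ _ _ _ _ _ _ _ hP hu hs hQ
    (mul_ne_zero h1zz hD')]
  exact final_alg μ P z w l m a _ _ _ hP h1z hQ h1zz hD' rfl rfl rfl


theorem stmt19 (μ lam : ℂ) (hμ : 0 < μ.re) (hlam : ‖lam‖ < 1)
    (θ : ℝ) (z : ℂ) (hz : z ∈ unitDisk) (hz0 : z ≠ 0) :
    deriv (Hfun μ lam (Complex.exp (θ * Complex.I))) z /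
          Hfun μ lam (Complex.exp (θ * Complex.I)) z
        - μ / (Real.pi : ℂ) * cfun z lam =
      (‖μ‖ / Real.pi : ℝ) * (rfun z lam : ℂ) *
        (deriv (Gfun μ lam θ) z / (‖deriv (Gfun μ lam θ) z‖ : ℂ)) := by
  classical
  set a : ℂ := Complex.exp (θ * Complex.I) with ha_def
  have ha : ‖a‖ = 1 := Complex.norm_exp_ofReal_mul_I θ
  have hzabs : ‖z‖ < 1 := mem_unitDisk.mp hz
  have hπ : (Real.pi : ℂ) ≠ 0 := by
    simpa using Real.pi_ne_zero
  have hH' : HasDerivAt (Hlog μ lam a)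
      (μ / (Real.pi : ℂ) *
        ((dl lam (a * z) - 1) / ((1 - dl lam (a * z) * z) * (1 - z)))) z := by
    have h0 := ((hasDerivAt_segInt (gH_analytic hlam ha) hz)).const_mul (μ / (Real.pi : ℂ))
    exact h0
  have hHfun : HasDerivAt (Hfun μ lam a)
      (Complex.exp (Hlog μ lam a z) *
        (μ / (Real.pi : ℂ) *
          ((dl lam (a * z) - 1) / ((1 - dl lam (a * z) * z) * (1 - z))))) z := by
    have := (Complex.hasDerivAt_exp (Hlog μ lam a z)).comp z hH'
    exact this
  have hquot : deriv (Hfun μ lam a) z / Hfun μ lam a z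
      = μ / (Real.pi : ℂ) *
          ((dl lam (a * z) - 1) / ((1 - dl lam (a * z) * z) * (1 - z))) := by
    rw [hHfun.deriv]
    unfold Hfun
    rw [mul_div_cancel_left₀ _ (Complex.exp_ne_zero _)]
  have hG : HasDerivAt (Gfun μ lam θ)
      (μ / (Real.pi : ℂ) *
        (a * z / (1 + ((starRingEnd ℂ) lam * a - lam) * z - a * z ^ 2) ^ 2)) z := by
    have h0 := ((hasDerivAt_segInt (gG_analytic hlam ha) hz)).const_mul (μ / (Real.pi : ℂ))
    exact h0
  rw [hquot, hG.deriv, gH_eq hlam ha hzabs]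
  have ha0 : a ≠ 0 := Complex.exp_ne_zero _
  have hconjA : (starRingEnd ℂ) a = a⁻¹ := by
    apply eq_inv_of_mul_eq_one_left
    rw [mul_comm, Complex.mul_conj, Complex.normSq_eq_norm_sq, ha]
    norm_num
  have hμ0 : μ ≠ 0 := by
    intro h; rw [h] at hμ; simp at hμ
  have hμabs : ((‖μ‖ : ℝ) : ℂ) ≠ 0 := by
    simpa using norm_ne_zero_iff.mpr hμ0
  have hzC : ((‖z‖ : ℝ) : ℂ) ≠ 0 := by
    simpa using norm_ne_zero_iff.mpr hz0
  have h1z : (1 : ℂ) - z ≠ 0 := one_sub_ne_s19 hzabs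
  have hQ : 1 + ((starRingEnd ℂ) lam * a - lam) * z - a * z ^ 2 ≠ 0 := Q_ne hlam ha hzabs
  have hcQ : (starRingEnd ℂ) (1 + ((starRingEnd ℂ) lam * a - lam) * z - a * z ^ 2) ≠ 0 :=
    fun h => hQ (by simpa using congrArg (starRingEnd ℂ) h)
  have hns : Complex.normSq z < 1 := by
    rw [← Complex.sq_norm]; nlinarith [norm_nonneg z]
  have h1zz : (1 : ℂ) - z * (starRingEnd ℂ) z ≠ 0 := by
    rw [Complex.mul_conj, ← Complex.ofReal_one, ← Complex.ofReal_sub]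
    exact Complex.ofReal_ne_zero.mpr (by linarith)
  have hre : (lam * z).re ≤ ‖lam‖ * ‖z‖ := by
    calc (lam * z).re ≤ ‖lam * z‖ := Complex.re_le_norm _
      _ = ‖lam‖ * ‖z‖ := norm_mul _ _
  have hz0' : 0 < ‖z‖ := norm_pos_iff.mpr hz0
  have hDr : 0 < 1 + Complex.normSq z - 2 * (lam * z).re := by
    have h2 : Complex.normSq z = ‖z‖ ^ 2 := (Complex.sq_norm z).symm
    nlinarith [norm_nonneg lam]
  have hD : (1 : ℂ) + z * (starRingEnd ℂ) z - (lam * z + (starRingEnd ℂ) lam * (starRingEnd ℂ) z) ≠ 0 := by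
    rw [Complex.mul_conj, ← map_mul, Complex.add_conj]
    rw [show (1:ℂ) + ↑(Complex.normSq z) - ↑(2*(lam*z).re) = ((1 + Complex.normSq z - 2*(lam*z).re : ℝ) : ℂ) by push_cast; ring]
    exact Complex.ofReal_ne_zero.mpr (ne_of_gt hDr)
  have habs : ‖μ / (Real.pi : ℂ) *
      (a * z / (1 + ((starRingEnd ℂ) lam * a - lam) * z - a * z ^ 2) ^ 2)‖
      = ‖μ‖ * ‖z‖ /
        (Real.pi * ‖1 + ((starRingEnd ℂ) lam * a - lam) * z - a * z ^ 2‖ ^ 2) := by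
    rw [norm_mul, norm_div, norm_div, norm_mul, norm_pow, Complex.norm_real, Real.norm_eq_abs, ha,
      abs_of_pos Real.pi_pos]
    ring
  rw [habs]
  unfold cfun rfun
  push_cast
  rw [absSqC z, absSqC lam, absSqC (1 + ((starRingEnd ℂ) lam * a - lam) * z - a * z ^ 2),
    reC (lam * z)]
  simp only [map_add, map_sub, map_mul, map_one, map_pow, Complex.conj_conj, hconjA]
  exact main_alg μ (Real.pi : ℂ) ((‖μ‖ : ℝ) : ℂ) ((‖z‖ : ℝ) : ℂ)
    z ((starRingEnd ℂ) z) lam ((starRingEnd ℂ) lam) a ha0 hπ hμabs hzC h1z hQ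
    (by rw [← hconjA]; simpa using hcQ) h1zz hD
end
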